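/- arXiv:1003.3138 — 5 statements merged into one kernel-verified Lean document; each statement's English description precedes it below -/
import Mathlib

section
/- Let π be an 𝓔-measurable quasi-probability kernel. The following statements are equivalent: (1) π is a normal 𝓔-measurable kernel; (2) π is an adapted 𝓔-measurable kernel and π(x, Δ^π_x) = 1 for each x ∈ S_π; (3) π is an adapted 𝓔-measurable kernel and proper as an 𝓝_π-measurable kernel; (4) π is proper as an 𝓔_π-measurable kernel and J_{𝓔_π}(π) = J_𝓔(π), where 𝓔_π = 𝓔 ∩ 𝓝_π; (5) π is proper as an 𝓢_π-measurable kernel and J_{𝓢_π}(π) = J_𝓔(π). -/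
open MeasureTheory
open scoped ENNReal

variable {X : Type*}

/-- A quasi-probability kernel on `(X, mX)`: `π(·,F)` is `mX`-measurable for each
`mX`-measurable `F`, and each `π(x,·)` is a measure with total mass `0` or `1`. -/
def IsQPK (mX : MeasurableSpace X) (π : X → @Measure X mX) : Prop :=
  (∀ F : Set X, MeasurableSet[mX] F → Measurable[mX] fun x => π x F) ∧
    (∀ x : X, π x Set.univ = 0 ∨ π x Set.univ = 1)

/-- The support `S_π = {x : π(x,X) = 1}` of a quasi-probability kernel. -/
def qpkSupp (mX : MeasurableSpace X) (π : X → @Measure X mX) : Set X :=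
  {x | π x Set.univ = 1}

/-- `π` is `𝓔`-measurable: `π(·,F)` is `𝓔`-measurable for each `mX`-measurable `F`. -/
def EMeasK (mX 𝓔 : MeasurableSpace X) (π : X → @Measure X mX) : Prop :=
  ∀ F : Set X, MeasurableSet[mX] F → Measurable[𝓔] fun x => π x F

/-- `J_𝓔(π)`: the set of probability measures `μ` on `(X, mX)` with
`μ(E ∩ F) = ∫_E π(·,F) dμ` for all `E ∈ 𝓔` and `F ∈ mX`. -/
def J (mX 𝓔 : MeasurableSpace X) (π : X → @Measure X mX) : Set (@Measure X mX) :=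
  {μ | IsProbabilityMeasure μ ∧ ∀ E F : Set X, MeasurableSet[𝓔] E → MeasurableSet[mX] F →
      μ (E ∩ F) = ∫⁻ x in E, π x F ∂μ}

/-- `J_⋆(π)`: the set of probability measures `μ` on `(X, mX)` with
`μ(F) = ∫ π(·,F) dμ` for all `F ∈ mX`. -/
def Jstar (mX : MeasurableSpace X) (π : X → @Measure X mX) : Set (@Measure X mX) :=
  {μ | IsProbabilityMeasure μ ∧ ∀ F : Set X, MeasurableSet[mX] F → μ F = ∫⁻ x, π x F ∂μ}

/-- `π` is proper as an `𝓔`-measurable kernel: `π(x, E ∩ F) = 1_E(x)·π(x,F)` for all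
`E ∈ 𝓔`, `F ∈ mX` and `x ∈ X`. -/
def IsProperK (mX 𝓔 : MeasurableSpace X) (π : X → @Measure X mX) : Prop :=
  ∀ E F : Set X, MeasurableSet[𝓔] E → MeasurableSet[mX] F → ∀ x : X,
    π x (E ∩ F) = Set.indicator E (fun _ => π x F) x

/-- `μ` is trivial on `𝓔` if `μ(E) ∈ {0,1}` for every `E ∈ 𝓔`. -/
def IsTrivialOn (mX 𝓔 : MeasurableSpace X) (μ : @Measure X mX) : Prop :=
  ∀ E : Set X, MeasurableSet[𝓔] E → μ E = 0 ∨ μ E = 1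

/-- `π` is adapted if `π(x,·) ∈ J_𝓔(π)` for every `x ∈ S_π`. -/
def IsAdaptedK (mX 𝓔 : MeasurableSpace X) (π : X → @Measure X mX) : Prop :=
  ∀ x ∈ qpkSupp mX π, π x ∈ J mX 𝓔 π

/-- `π` is normal if it is adapted and `π(x,·)` is trivial on `𝓔` for every `x ∈ S_π`. -/
def IsNormalK (mX 𝓔 : MeasurableSpace X) (π : X → @Measure X mX) : Prop :=
  IsAdaptedK mX 𝓔 π ∧ ∀ x ∈ qpkSupp mX π, IsTrivialOn mX 𝓔 (π x)

/-- The restriction of `π` to `D`: the kernel `ρ(x,F) = 1_D(x)·π(x,F)`. -/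
noncomputable def kerRestrict (mX : MeasurableSpace X) (π : X → @Measure X mX) (D : Set X) :
    X → @Measure X mX :=
  Set.indicator D π

/-- `ρ` is a refinement of `π`: an `𝓔`-measurable quasi-probability kernel which is the
restriction of `π` to some `D ∈ 𝓔` and satisfies `J_𝓔(ρ) = J_𝓔(π)`. -/
def IsRefinement (mX 𝓔 : MeasurableSpace X) (π ρ : X → @Measure X mX) : Prop :=
  IsQPK mX ρ ∧ EMeasK mX 𝓔 ρ ∧ (∃ D : Set X, MeasurableSet[𝓔] D ∧ ρ = kerRestrict mX π D) ∧
    J mX 𝓔 ρ = J mX 𝓔 π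

/-- `Δ^π_μ = {x ∈ S_π : π(x,·) = μ}`. -/
def DeltaM (mX : MeasurableSpace X) (π : X → @Measure X mX) (μ : @Measure X mX) : Set X :=
  {x ∈ qpkSupp mX π | π x = μ}

/-- `Δ^π_x = {y ∈ S_π : π(y,·) = π(x,·)}`. -/
def Delta (mX : MeasurableSpace X) (π : X → @Measure X mX) (x : X) : Set X :=
  {y ∈ qpkSupp mX π | π y = π x}

/-- `𝓝_π`: the σ-algebra of `mX`-measurable sets `N` such that for every `x ∈ S_π` either
`Δ^π_x ⊆ N` or `Δ^π_x ∩ N = ∅`. -/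
def NSigma (mX : MeasurableSpace X) (π : X → @Measure X mX) : MeasurableSpace X where
  MeasurableSet' N := MeasurableSet[mX] N ∧
    ∀ x ∈ qpkSupp mX π, Delta mX π x ⊆ N ∨ Delta mX π x ∩ N = ∅
  measurableSet_empty :=
    ⟨@MeasurableSet.empty X mX, fun _ _ => Or.inr (Set.inter_empty _)⟩
  measurableSet_compl := by
    rintro N ⟨hN, h⟩
    refine ⟨hN.compl, fun x hx => ?_⟩
    rcases h x hx with h1 | h1
    · refine Or.inr ?_
      ext y
      simp only [Set.mem_inter_iff, Set.mem_compl_iff, Set.mem_empty_iff_false, iff_false,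
        not_and, not_not]
      exact fun hy => h1 hy
    · exact Or.inl fun y hy hyN => (Set.eq_empty_iff_forall_notMem.1 h1) y ⟨hy, hyN⟩
  measurableSet_iUnion := by
    intro f hf
    refine ⟨MeasurableSet.iUnion fun i => (hf i).1, fun x hx => ?_⟩
    by_cases hc : ∃ i, Delta mX π x ⊆ f i
    · rcases hc with ⟨i, hi⟩
      exact Or.inl (hi.trans (Set.subset_iUnion f i))
    · push_neg at hc
      refine Or.inr ?_
      ext y
      simp only [Set.mem_inter_iff, Set.mem_iUnion, Set.mem_empty_iff_false, iff_false, not_and]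
      rintro hy ⟨i, hyi⟩
      rcases (hf i).2 x hx with h1 | h1
      · exact hc i h1
      · exact (Set.eq_empty_iff_forall_notMem.1 h1) y ⟨hy, hyi⟩

/-- `𝓢_π`: the least σ-algebra making all the functions `π(·,F)`, `F ∈ mX`, measurable,
i.e. the σ-algebra generated by these functions. -/
def Spi (mX : MeasurableSpace X) (π : X → @Measure X mX) : MeasurableSpace X :=
  ⨆ F ∈ {F : Set X | MeasurableSet[mX] F},
    MeasurableSpace.comap (fun x => π x F) inferInstance


section StmtHelpers

open MeasurableSpace

variable {mX 𝓔 : MeasurableSpace X} {π : X → @Measure X mX}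

private theorem exists_ctble_pi {mX : MeasurableSpace X}
    (hCG : @MeasurableSpace.CountablyGenerated X mX) :
    ∃ C : Set (Set X), C.Countable ∧ IsPiSystem C ∧ mX = MeasurableSpace.generateFrom C ∧
      ∀ s ∈ C, MeasurableSet[mX] s := by
  letI := mX
  obtain ⟨f, hf⟩ := (MeasurableSpace.countable_countableGeneratingSet (α := X)).exists_eq_range
    MeasurableSpace.nonempty_countableGeneratingSet
  have hfm : ∀ i, MeasurableSet[mX] (f i) := fun i =>
    MeasurableSpace.measurableSet_countableGeneratingSet (hf ▸ Set.mem_range_self i)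
  set g : Finset ℕ → Set X := fun s => ⋂ i ∈ s, f i with hg
  have hmeas : ∀ s ∈ Set.range g, MeasurableSet[mX] s := by
    rintro _ ⟨s, rfl⟩
    exact MeasurableSet.biInter (Set.to_countable _) fun i _ => hfm i
  have hgen : MeasurableSpace.generateFrom (MeasurableSpace.countableGeneratingSet X) = mX :=
    MeasurableSpace.generateFrom_countableGeneratingSet
  refine ⟨Set.range g, Set.countable_range g, ?_, ?_, hmeas⟩
  · rintro _ ⟨s, rfl⟩ _ ⟨t, rfl⟩ -
    refine ⟨s ∪ t, ?_⟩
    simp only [hg]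
    ext x
    simp only [Set.mem_iInter, Finset.mem_union, Set.mem_inter_iff]
    constructor
    · exact fun h => ⟨fun i hi => h i (Or.inl hi), fun i hi => h i (Or.inr hi)⟩
    · rintro ⟨h1, h2⟩ i (hi | hi)
      exacts [h1 i hi, h2 i hi]
  · refine le_antisymm ?_ (MeasurableSpace.generateFrom_le hmeas)
    rw [← hgen]
    refine MeasurableSpace.generateFrom_le fun t ht => ?_
    rw [hf] at ht
    obtain ⟨i, rfl⟩ := ht
    refine MeasurableSpace.measurableSet_generateFrom ⟨{i}, ?_⟩
    simp [hg]

private theorem qpk_zero (hπ : IsQPK mX π) {x : X} (hx : x ∉ qpkSupp mX π) : π x = 0 := by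
  rcases hπ.2 x with h | h
  · exact Measure.measure_univ_eq_zero.mp h
  · exact absurd h hx

private theorem measurableSet_nsigma_iff {s : Set X} :
    MeasurableSet[NSigma mX π] s ↔ (MeasurableSet[mX] s ∧
      ∀ x ∈ qpkSupp mX π, Delta mX π x ⊆ s ∨ Delta mX π x ∩ s = ∅) := Iff.rfl

private theorem level_meas {m : MeasurableSpace X}
    (hm : ∀ F : Set X, MeasurableSet[mX] F → Measurable[m] fun y => π y F)
    {F : Set X} (hF : MeasurableSet[mX] F) (c : ℝ≥0∞) :
    MeasurableSet[m] {y | π y F = c} := by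
  have h := hm F hF (measurableSet_singleton c)
  have he : (fun y => π y F) ⁻¹' {c} = {y | π y F = c} := by ext y; simp
  rwa [he] at h

private theorem supp_meas {m : MeasurableSpace X}
    (hm : ∀ F : Set X, MeasurableSet[mX] F → Measurable[m] fun y => π y F) :
    MeasurableSet[m] (qpkSupp mX π) :=
  level_meas hm MeasurableSet.univ 1

private theorem delta_eq {C : Set (Set X)} (hCpi : IsPiSystem C)
    (hCgen : mX = MeasurableSpace.generateFrom C)
    {x : X} (hx : x ∈ qpkSupp mX π) :
    Delta mX π x = qpkSupp mX π ∩ ⋂ F ∈ C, {y | π y F = π x F} := by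
  letI := mX
  ext y
  simp only [Delta, Set.mem_setOf_eq, Set.mem_inter_iff, Set.mem_iInter]
  constructor
  · rintro ⟨hyS, hyx⟩
    exact ⟨hyS, fun F _ => by rw [hyx]⟩
  · rintro ⟨hyS, hagree⟩
    refine ⟨hyS, ?_⟩
    haveI : IsProbabilityMeasure (π y) := ⟨hyS⟩
    refine ext_of_generate_finite C hCgen hCpi (fun s hs => hagree s hs) ?_
    have h1 : π y Set.univ = 1 := hyS
    have h2 : π x Set.univ = 1 := hx
    rw [h1, h2]

private theorem delta_meas {m : MeasurableSpace X}
    (hCG : @MeasurableSpace.CountablyGenerated X mX)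
    (hm : ∀ F : Set X, MeasurableSet[mX] F → Measurable[m] fun y => π y F)
    {x : X} (hx : x ∈ qpkSupp mX π) : MeasurableSet[m] (Delta mX π x) := by
  obtain ⟨C, hCc, hCpi, hCgen, hCm⟩ := exists_ctble_pi hCG
  rw [delta_eq hCpi hCgen hx]
  exact (supp_meas hm).inter
    (MeasurableSet.biInter hCc fun F hF => level_meas hm (hCm F hF) _)

private theorem delta_mem_N (hCG : @MeasurableSpace.CountablyGenerated X mX)
    (hπ : IsQPK mX π) {x : X} (hx : x ∈ qpkSupp mX π) :
    MeasurableSet[NSigma mX π] (Delta mX π x) := by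
  refine measurableSet_nsigma_iff.mpr ⟨delta_meas hCG hπ.1 hx, fun z hz => ?_⟩
  by_cases hzx : π z = π x
  · exact Or.inl fun y hy => ⟨hy.1, hy.2.trans hzx⟩
  · refine Or.inr (Set.eq_empty_iff_forall_notMem.2 ?_)
    rintro y ⟨⟨hyS, hyz⟩, ⟨hyS', hyx⟩⟩
    exact hzx (hyz.symm.trans hyx)

private theorem spi_le {m : MeasurableSpace X}
    (hm : ∀ F : Set X, MeasurableSet[mX] F → Measurable[m] fun y => π y F) :
    Spi mX π ≤ m :=
  iSup_le fun F => iSup_le fun hF => measurable_iff_comap_le.mp (hm F hF)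

private theorem measurable_spi {F : Set X} (hF : MeasurableSet[mX] F) :
    Measurable[Spi mX π] fun y => π y F :=
  measurable_iff_comap_le.mpr
    (le_iSup₂ (f := fun (F : Set X) (_ : F ∈ {F : Set X | MeasurableSet[mX] F}) =>
      MeasurableSpace.comap (fun x => π x F) inferInstance) F hF)

private theorem measurable_nsigma (hπ : IsQPK mX π) {F : Set X}
    (hF : MeasurableSet[mX] F) :
    Measurable[NSigma mX π] fun y => π y F := by
  intro B hB
  refine measurableSet_nsigma_iff.mpr ⟨hπ.1 F hF hB, fun z hz => ?_⟩
  by_cases hzB : π z F ∈ B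
  · exact Or.inl fun y hy => show π y F ∈ B by rw [hy.2]; exact hzB
  · refine Or.inr (Set.eq_empty_iff_forall_notMem.2 ?_)
    rintro y ⟨⟨hyS, hyz⟩, hyB⟩
    exact hzB (by rw [← hyz]; exact hyB)

private theorem proper_mono {𝓓 𝓓' : MeasurableSpace X} (h : 𝓓' ≤ 𝓓)
    (hp : IsProperK mX 𝓓 π) : IsProperK mX 𝓓' π :=
  fun E F hE hF => hp E F (h _ hE) hF

private theorem J_antitone {𝓓 𝓓' : MeasurableSpace X} (h : 𝓓' ≤ 𝓓) :
    J mX 𝓓 π ⊆ J mX 𝓓' π :=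
  fun μ hμ => ⟨hμ.1, fun E F hE hF => hμ.2 E F (h _ hE) hF⟩

private theorem proper_mem_J {𝓓 : MeasurableSpace X} (h𝓓 : 𝓓 ≤ mX)
    (hm : ∀ F : Set X, MeasurableSet[mX] F → Measurable[𝓓] fun y => π y F)
    (hp : IsProperK mX 𝓓 π) {x : X} (hx : x ∈ qpkSupp mX π) : π x ∈ J mX 𝓓 π := by
  letI := mX
  haveI : IsProbabilityMeasure (π x) := ⟨hx⟩
  have hx1 : π x Set.univ = 1 := hx
  have key : ∀ D : Set X, MeasurableSet[𝓓] D →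
      π x D = Set.indicator D (fun _ => (1 : ℝ≥0∞)) x := by
    intro D hD
    have h := hp D Set.univ hD MeasurableSet.univ x
    rw [Set.inter_univ] at h
    rw [h]
    by_cases hxD : x ∈ D <;> simp [hxD, hx1]
  have htrim : (π x).trim h𝓓 = (Measure.dirac x).trim h𝓓 := by
    refine @Measure.ext X 𝓓 _ _ fun D hD => ?_
    rw [trim_measurableSet_eq h𝓓 hD, trim_measurableSet_eq h𝓓 hD, key D hD,
      Measure.dirac_apply' x (h𝓓 _ hD)]
    rfl
  refine ⟨inferInstance, fun D F hD hF => ?_⟩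
  have hg : Measurable[𝓓] (D.indicator fun y => π y F) := (hm F hF).indicator hD
  calc π x (D ∩ F) = Set.indicator D (fun _ => π x F) x := hp D F hD hF x
    _ = D.indicator (fun y => π y F) x := by by_cases hxD : x ∈ D <;> simp [hxD]
    _ = ∫⁻ y, D.indicator (fun y => π y F) y ∂(Measure.dirac x) :=
        (lintegral_dirac' x (hg.mono h𝓓 le_rfl)).symm
    _ = ∫⁻ y, D.indicator (fun y => π y F) y ∂((Measure.dirac x).trim h𝓓) :=
        (lintegral_trim h𝓓 hg).symm
    _ = ∫⁻ y, D.indicator (fun y => π y F) y ∂((π x).trim h𝓓) := by rw [htrim]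
    _ = ∫⁻ y, D.indicator (fun y => π y F) y ∂(π x) := lintegral_trim h𝓓 hg
    _ = ∫⁻ y in D, π y F ∂(π x) := lintegral_indicator (h𝓓 _ hD) _

private theorem triv_of_delta_one (h𝓔 : 𝓔 ≤ mX)
    (hCG : @MeasurableSpace.CountablyGenerated X mX)
    (hπ : IsQPK mX π) {x : X} (hx : x ∈ qpkSupp mX π)
    (had : π x ∈ J mX 𝓔 π) (hΔ : π x (Delta mX π x) = 1) :
    IsTrivialOn mX 𝓔 (π x) := by
  letI := mX
  intro E hE
  haveI : IsProbabilityMeasure (π x) := ⟨hx⟩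
  by_cases h0 : π x E = 0
  · exact Or.inl h0
  right
  have hEm : MeasurableSet[mX] E := h𝓔 E hE
  have hint : π x (E ∩ Eᶜ) = ∫⁻ y in E, π y Eᶜ ∂(π x) := had.2 E Eᶜ hE hEm.compl
  rw [Set.inter_compl_self, measure_empty] at hint
  have hae : ∀ᵐ y ∂(π x), y ∈ E → π y Eᶜ = 0 :=
    (setLIntegral_eq_zero_iff hEm (hπ.1 Eᶜ hEm.compl)).mp hint.symm
  have hbad : π x {y | ¬(y ∈ E → π y Eᶜ = 0)} = 0 := ae_iff.mp hae
  have hΔm : MeasurableSet[mX] (Delta mX π x) := delta_meas hCG hπ.1 hx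
  have hΔc : π x (Delta mX π x)ᶜ = 0 := (prob_compl_eq_zero_iff hΔm).mpr hΔ
  have hEΔ : π x ((E ∩ Delta mX π x) \ {y | ¬(y ∈ E → π y Eᶜ = 0)}) ≠ 0 := by
    rw [measure_diff_null hbad]
    intro hz
    apply h0
    have hle : π x E ≤ π x (E ∩ Delta mX π x) + π x ((Delta mX π x)ᶜ) := by
      refine le_trans (measure_mono ?_) (measure_union_le _ _)
      intro y hy
      by_cases h : y ∈ Delta mX π x
      · exact Or.inl ⟨hy, h⟩
      · exact Or.inr h
    rw [hz, hΔc, add_zero] at hle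
    exact le_zero_iff.mp hle
  obtain ⟨y, ⟨⟨hyE, hyΔ⟩, hyg⟩⟩ := nonempty_of_measure_ne_zero hEΔ
  have hyc : π y Eᶜ = 0 := not_not.mp hyg hyE
  have hEc : π x Eᶜ = 0 := by rw [← hyΔ.2]; exact hyc
  exact (prob_compl_eq_zero_iff hEm).mp hEc

private theorem level_one (h𝓔 : 𝓔 ≤ mX) (hπ : IsQPK mX π) (hπE : EMeasK mX 𝓔 π)
    {x : X} (hx : x ∈ qpkSupp mX π) (had : π x ∈ J mX 𝓔 π)
    (htriv : IsTrivialOn mX 𝓔 (π x)) {F : Set X} (hF : MeasurableSet[mX] F) :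
    π x {y | π y F = π x F} = 1 := by
  letI := mX
  haveI : IsProbabilityMeasure (π x) := ⟨hx⟩
  have hx1 : π x Set.univ = 1 := hx
  set c := π x F with hc
  have hcle : c ≤ 1 := by rw [← hx1]; exact measure_mono (Set.subset_univ F)
  have hcne : c ≠ ∞ := (lt_of_le_of_lt hcle ENNReal.one_lt_top).ne
  have hmF : Measurable[mX] fun y => π y F := hπ.1 F hF
  have hEF : Measurable[𝓔] fun y => π y F := hπE F hF
  have hup : ∀ r : ℝ≥0∞, c < r → π x {y | r ≤ π y F} = 0 := by
    intro r hr
    have hEr : MeasurableSet[𝓔] {y | r ≤ π y F} := hEF measurableSet_Ici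
    rcases htriv _ hEr with h | h
    · exact h
    exfalso
    have hEr' : MeasurableSet[mX] {y | r ≤ π y F} := h𝓔 _ hEr
    have h1 : π x ({y | r ≤ π y F} ∩ F) = ∫⁻ y in {y | r ≤ π y F}, π y F ∂(π x) :=
      had.2 _ F hEr hF
    have h2 : r * π x {y | r ≤ π y F} ≤ ∫⁻ y in {y | r ≤ π y F}, π y F ∂(π x) := by
      rw [← setLIntegral_const]
      exact setLIntegral_mono' hEr' fun y hy => hy
    have hrc : r ≤ c := by
      calc r = r * π x {y | r ≤ π y F} := by rw [h, mul_one]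
        _ ≤ ∫⁻ y in {y | r ≤ π y F}, π y F ∂(π x) := h2
        _ = π x ({y | r ≤ π y F} ∩ F) := h1.symm
        _ ≤ c := measure_mono Set.inter_subset_right
    exact absurd hrc (not_le.mpr hr)
  have hlo : ∀ r : ℝ≥0∞, r < c → π x {y | π y F ≤ r} = 0 := by
    intro r hr
    have hDr : MeasurableSet[𝓔] {y | π y F ≤ r} := hEF measurableSet_Iic
    rcases htriv _ hDr with h | h
    · exact h
    exfalso
    have hDr' : MeasurableSet[mX] {y | π y F ≤ r} := h𝓔 _ hDr
    have h1 : π x ({y | π y F ≤ r} ∩ F) = ∫⁻ y in {y | π y F ≤ r}, π y F ∂(π x) :=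
      had.2 _ F hDr hF
    have h2 : ∫⁻ y in {y | π y F ≤ r}, π y F ∂(π x) ≤ r * π x {y | π y F ≤ r} := by
      rw [← setLIntegral_const]
      exact setLIntegral_mono' hDr' fun y hy => hy
    have hcompl : π x {y | π y F ≤ r}ᶜ = 0 := (prob_compl_eq_zero_iff hDr').mpr h
    have h4 : c ≤ π x ({y | π y F ≤ r} ∩ F) + π x ({y | π y F ≤ r}ᶜ) := by
      refine le_trans (measure_mono ?_) (measure_union_le _ _)
      intro y hy
      by_cases hyD : y ∈ {y | π y F ≤ r}
      · exact Or.inl ⟨hyD, hy⟩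
      · exact Or.inr hyD
    rw [hcompl, add_zero, h1] at h4
    have hcr : c ≤ r := h4.trans (h2.trans (by rw [h, mul_one]))
    exact absurd hcr (not_le.mpr hr)
  have hne : π x {y | π y F ≠ c} = 0 := by
    have hupU : π x (⋃ n : ℕ, {y | c + ((n : ℝ≥0∞))⁻¹ ≤ π y F}) = 0 := by
      refine measure_iUnion_null fun n => hup _ ?_
      exact ENNReal.lt_add_right hcne
        (ENNReal.inv_ne_zero.2 (ENNReal.natCast_ne_top n))
    by_cases hc0 : c = 0
    · refine measure_mono_null (fun y hy => ?_) hupU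
      have hgt : c < π y F := by
        rcases (lt_or_gt_of_ne hy) with h | h
        · exact absurd h (by rw [hc0]; exact ENNReal.not_lt_zero)
        · exact h
      obtain ⟨n, hn⟩ := ENNReal.exists_inv_nat_lt (tsub_pos_of_lt hgt).ne'
      refine Set.mem_iUnion.2 ⟨n, ?_⟩
      show c + ((n : ℝ≥0∞))⁻¹ ≤ π y F
      calc c + ((n : ℝ≥0∞))⁻¹ ≤ c + (π y F - c) := add_le_add le_rfl hn.le
        _ = π y F := add_tsub_cancel_of_le hgt.le
    · have hloU : π x (⋃ n : ℕ, {y | π y F ≤ c - ((n : ℝ≥0∞))⁻¹}) = 0 := by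
        refine measure_iUnion_null fun n => hlo _ ?_
        exact ENNReal.sub_lt_self hcne hc0
          (ENNReal.inv_ne_zero.2 (ENNReal.natCast_ne_top n))
      refine measure_mono_null (fun y hy => ?_) (measure_union_null hupU hloU)
      rcases (lt_or_gt_of_ne hy) with hlt | hgt
      · obtain ⟨n, hn⟩ := ENNReal.exists_inv_nat_lt (tsub_pos_of_lt hlt).ne'
        refine Or.inr (Set.mem_iUnion.2 ⟨n, ?_⟩)
        refine ENNReal.le_sub_of_add_le_right hn.ne_top ?_
        calc π y F + ((n : ℝ≥0∞))⁻¹ ≤ π y F + (c - π y F) := add_le_add le_rfl hn.le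
          _ = c := add_tsub_cancel_of_le hlt.le
      · obtain ⟨n, hn⟩ := ENNReal.exists_inv_nat_lt (tsub_pos_of_lt hgt).ne'
        refine Or.inl (Set.mem_iUnion.2 ⟨n, ?_⟩)
        show c + ((n : ℝ≥0∞))⁻¹ ≤ π y F
        calc c + ((n : ℝ≥0∞))⁻¹ ≤ c + (π y F - c) := add_le_add le_rfl hn.le
          _ = π y F := add_tsub_cancel_of_le hgt.le
  have hmc : MeasurableSet[mX] {y | π y F = c} := level_meas hπ.1 hF c
  refine (prob_compl_eq_zero_iff hmc).mp ?_
  rw [Set.compl_setOf]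
  exact hne

private theorem delta_one (h𝓔 : 𝓔 ≤ mX)
    (hCG : @MeasurableSpace.CountablyGenerated X mX)
    (hπ : IsQPK mX π) (hπE : EMeasK mX 𝓔 π)
    {x : X} (hx : x ∈ qpkSupp mX π) (had : π x ∈ J mX 𝓔 π)
    (htriv : IsTrivialOn mX 𝓔 (π x)) :
    π x (Delta mX π x) = 1 := by
  letI := mX
  haveI : IsProbabilityMeasure (π x) := ⟨hx⟩
  have hx1 : π x Set.univ = 1 := hx
  obtain ⟨C, hCc, hCpi, hCgen, hCm⟩ := exists_ctble_pi hCG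
  rw [delta_eq hCpi hCgen hx]
  have hS1 : π x (qpkSupp mX π) = 1 := by
    have h := level_one h𝓔 hπ hπE hx had htriv MeasurableSet.univ
    have heq : {y | π y Set.univ = π x Set.univ} = qpkSupp mX π := by
      ext y; simp [qpkSupp, hx1]
    rwa [heq] at h
  have hmeas : MeasurableSet[mX] (qpkSupp mX π ∩ ⋂ F ∈ C, {y | π y F = π x F}) :=
    (supp_meas hπ.1).inter
      (MeasurableSet.biInter hCc fun F hF => level_meas hπ.1 (hCm F hF) _)
  refine (prob_compl_eq_zero_iff hmeas).mp ?_
  rw [Set.compl_inter, Set.compl_iInter₂]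
  refine measure_union_null ((prob_compl_eq_zero_iff (supp_meas hπ.1)).mpr hS1) ?_
  refine (measure_biUnion_null_iff hCc).2 fun F hF => ?_
  exact (prob_compl_eq_zero_iff (level_meas hπ.1 (hCm F hF) _)).mpr
    (level_one h𝓔 hπ hπE hx had htriv (hCm F hF))

private theorem proper_N (hCG : @MeasurableSpace.CountablyGenerated X mX)
    (hπ : IsQPK mX π) (hΔ : ∀ x ∈ qpkSupp mX π, π x (Delta mX π x) = 1) :
    IsProperK mX (NSigma mX π) π := by
  letI := mX
  intro N F hN hF x
  by_cases hx : x ∈ qpkSupp mX π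
  · haveI : IsProbabilityMeasure (π x) := ⟨hx⟩
    have hxΔ : x ∈ Delta mX π x := ⟨hx, rfl⟩
    have hΔm : MeasurableSet[mX] (Delta mX π x) := delta_meas hCG hπ.1 hx
    have hΔc : π x (Delta mX π x)ᶜ = 0 := (prob_compl_eq_zero_iff hΔm).mpr (hΔ x hx)
    rcases hN.2 x hx with hsub | hdis
    · have hxN : x ∈ N := hsub hxΔ
      rw [Set.indicator_of_mem hxN]
      refine le_antisymm (measure_mono Set.inter_subset_right) ?_
      have hle : π x F ≤ π x (N ∩ F) + π x ((Delta mX π x)ᶜ) := by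
        refine le_trans (measure_mono ?_) (measure_union_le _ _)
        intro y hy
        by_cases h : y ∈ Delta mX π x
        · exact Or.inl ⟨hsub h, hy⟩
        · exact Or.inr h
      rwa [hΔc, add_zero] at hle
    · have hxN : x ∉ N := fun hxN =>
        (Set.eq_empty_iff_forall_notMem.1 hdis) x ⟨hxΔ, hxN⟩
      rw [Set.indicator_of_notMem hxN]
      refine le_zero_iff.mp ?_
      calc π x (N ∩ F) ≤ π x ((Delta mX π x)ᶜ) := by
            refine measure_mono fun y hy hyΔ => ?_
            exact (Set.eq_empty_iff_forall_notMem.1 hdis) y ⟨hyΔ, hy.1⟩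
        _ = 0 := hΔc
  · rw [qpk_zero hπ hx]
    simp

private theorem J_transfer {𝓓 : MeasurableSpace X} (h𝓔 : 𝓔 ≤ mX) (hπ : IsQPK mX π)
    (h𝓓 : 𝓓 ≤ mX)
    (htriv : ∀ x ∈ qpkSupp mX π, IsTrivialOn mX 𝓔 (π x))
    (hS : MeasurableSet[𝓓] (qpkSupp mX π))
    (hEstar : ∀ E : Set X, MeasurableSet[𝓔] E → MeasurableSet[𝓓] {y | π y E = 1}) :
    J mX 𝓓 π ⊆ J mX 𝓔 π := by
  letI := mX
  rintro μ ⟨hprob, hJ⟩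
  haveI := hprob
  have hSm : MeasurableSet[mX] (qpkSupp mX π) := supp_meas hπ.1
  have hμS : μ (qpkSupp mX π) = 1 := by
    have h := hJ Set.univ Set.univ MeasurableSet.univ MeasurableSet.univ
    rw [Set.univ_inter, measure_univ, Measure.restrict_univ] at h
    have hind : ∀ y, π y Set.univ = Set.indicator (qpkSupp mX π) (fun _ => (1 : ℝ≥0∞)) y := by
      intro y
      rcases hπ.2 y with h0 | h1
      · have hnm : y ∉ qpkSupp mX π := fun hy => by
          rw [show (π y) Set.univ = 1 from hy] at h0
          exact one_ne_zero h0
        rw [Set.indicator_of_notMem hnm]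
        exact h0
      · have hmem : y ∈ qpkSupp mX π := h1
        rw [Set.indicator_of_mem hmem]
        exact h1
    rw [lintegral_congr hind, lintegral_indicator hSm, setLIntegral_const, one_mul] at h
    exact h.symm
  have hμSc : μ (qpkSupp mX π)ᶜ = 0 := (prob_compl_eq_zero_iff hSm).mpr hμS
  refine ⟨hprob, fun E F hE hF => ?_⟩
  have hEm : MeasurableSet[mX] E := h𝓔 E hE
  set E' := {y | π y E = 1} with hE'def
  have hE'𝓓 : MeasurableSet[𝓓] E' := hEstar E hE
  have hE'm : MeasurableSet[mX] E' := h𝓓 _ hE'𝓓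
  have null1 : μ (E' \ E) = 0 := by
    have h := hJ E' Eᶜ hE'𝓓 hEm.compl
    have hz : ∫⁻ y in E', π y Eᶜ ∂μ = 0 := by
      have hpt : ∀ y, y ∈ E' → π y Eᶜ = (fun _ => (0 : ℝ≥0∞)) y := by
        intro y hy
        have hy1 : π y E = 1 := hy
        have hyS : y ∈ qpkSupp mX π := by
          rcases hπ.2 y with h0 | h1
          · exfalso
            have hle1 : (1 : ℝ≥0∞) ≤ π y Set.univ := by
              rw [← hy1]; exact measure_mono (Set.subset_univ E)
            rw [h0] at hle1
            exact not_le.mpr zero_lt_one hle1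
          · exact h1
        haveI : IsProbabilityMeasure (π y) := ⟨hyS⟩
        exact (prob_compl_eq_zero_iff hEm).mpr hy1
      calc ∫⁻ y in E', π y Eᶜ ∂μ = ∫⁻ _ in E', (0 : ℝ≥0∞) ∂μ :=
            setLIntegral_congr_fun hE'm (fun y hy => hpt y hy)
        _ = 0 := by simp
    rw [Set.diff_eq, h]
    exact hz
  have null2 : μ (E \ E') = 0 := by
    have hDm : MeasurableSet[𝓓] (qpkSupp mX π \ E') := hS.diff hE'𝓓
    have h := hJ _ E hDm hEm
    have hz : ∫⁻ y in qpkSupp mX π \ E', π y E ∂μ = 0 := by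
      have hpt : ∀ y, y ∈ qpkSupp mX π \ E' → π y E = (fun _ => (0 : ℝ≥0∞)) y := by
        intro y hy
        rcases htriv y hy.1 E hE with h0 | h1
        · exact h0
        · exact absurd h1 hy.2
      calc ∫⁻ y in qpkSupp mX π \ E', π y E ∂μ = ∫⁻ _ in qpkSupp mX π \ E', (0 : ℝ≥0∞) ∂μ :=
            setLIntegral_congr_fun (hSm.diff hE'm) (fun y hy => hpt y hy)
        _ = 0 := by simp
    have hz2 : μ ((qpkSupp mX π \ E') ∩ E) = 0 := by rw [h]; exact hz
    refine measure_mono_null (fun y hy => ?_) (measure_union_null hz2 hμSc)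
    by_cases hyS : y ∈ qpkSupp mX π
    · exact Or.inl ⟨⟨hyS, hy.2⟩, hy.1⟩
    · exact Or.inr hyS
  have haeq : E =ᵐ[μ] E' := MeasureTheory.ae_eq_set.2 ⟨null2, null1⟩
  have hres : μ.restrict E = μ.restrict E' := Measure.restrict_congr_set haeq
  have hsub1 : E ∩ F ⊆ (E' ∩ F) ∪ (E \ E') := by
    intro y hy
    by_cases h : y ∈ E'
    · exact Or.inl ⟨h, hy.2⟩
    · exact Or.inr ⟨hy.1, h⟩
  have hsub2 : E' ∩ F ⊆ (E ∩ F) ∪ (E' \ E) := by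
    intro y hy
    by_cases h : y ∈ E
    · exact Or.inl ⟨h, hy.2⟩
    · exact Or.inr ⟨hy.1, h⟩
  have hEinter : μ (E ∩ F) = μ (E' ∩ F) := by
    refine le_antisymm ?_ ?_
    · calc μ (E ∩ F) ≤ μ ((E' ∩ F) ∪ (E \ E')) := measure_mono hsub1
        _ ≤ μ (E' ∩ F) + μ (E \ E') := measure_union_le _ _
        _ = μ (E' ∩ F) := by rw [null2, add_zero]
    · calc μ (E' ∩ F) ≤ μ ((E ∩ F) ∪ (E' \ E)) := measure_mono hsub2
        _ ≤ μ (E ∩ F) + μ (E' \ E) := measure_union_le _ _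
        _ = μ (E ∩ F) := by rw [null1, add_zero]
  calc μ (E ∩ F) = μ (E' ∩ F) := hEinter
    _ = ∫⁻ y in E', π y F ∂μ := hJ E' F hE'𝓓 hF
    _ = ∫⁻ y in E, π y F ∂μ := by rw [hres]

end StmtHelpers

/-- the five characterisations of normality are equivalent. -/
theorem stmt13 (mX : MeasurableSpace X) (hCG : @MeasurableSpace.CountablyGenerated X mX)
    (𝓔 : MeasurableSpace X) (h𝓔 : 𝓔 ≤ mX)
    (π : X → @Measure X mX) (hπ : IsQPK mX π) (hπE : EMeasK mX 𝓔 π) :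
    List.TFAE [
      IsNormalK mX 𝓔 π,
      IsAdaptedK mX 𝓔 π ∧ ∀ x ∈ qpkSupp mX π, π x (Delta mX π x) = 1,
      IsAdaptedK mX 𝓔 π ∧ IsProperK mX (NSigma mX π) π,
      IsProperK mX (𝓔 ⊓ NSigma mX π) π ∧ J mX (𝓔 ⊓ NSigma mX π) π = J mX 𝓔 π,
      IsProperK mX (Spi mX π) π ∧ J mX (Spi mX π) π = J mX 𝓔 π] := by
  have hNle : NSigma mX π ≤ mX := fun s hs => hs.1
  have hmN : ∀ F : Set X, MeasurableSet[mX] F → Measurable[NSigma mX π] fun y => π y F :=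
    fun F hF => measurable_nsigma hπ hF
  have hmSpi : ∀ F : Set X, MeasurableSet[mX] F → Measurable[Spi mX π] fun y => π y F :=
    fun F hF => measurable_spi hF
  have hSpiE : Spi mX π ≤ 𝓔 := spi_le hπE
  have hSpiN : Spi mX π ≤ NSigma mX π := spi_le hmN
  have hSpimX : Spi mX π ≤ mX := spi_le hπ.1
  have hENmX : 𝓔 ⊓ NSigma mX π ≤ mX := le_trans inf_le_left h𝓔
  have hSpiEN : Spi mX π ≤ 𝓔 ⊓ NSigma mX π := le_inf hSpiE hSpiN
  have hmEN : ∀ F : Set X, MeasurableSet[mX] F → Measurable[𝓔 ⊓ NSigma mX π] fun y => π y F :=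
    fun F hF => (hmSpi F hF).mono hSpiEN le_rfl
  have h21 : (IsAdaptedK mX 𝓔 π ∧ ∀ x ∈ qpkSupp mX π, π x (Delta mX π x) = 1) →
      IsNormalK mX 𝓔 π := by
    rintro ⟨had, hone⟩
    exact ⟨had, fun x hx => triv_of_delta_one h𝓔 hCG hπ hx (had x hx) (hone x hx)⟩
  have h12 : IsNormalK mX 𝓔 π →
      (IsAdaptedK mX 𝓔 π ∧ ∀ x ∈ qpkSupp mX π, π x (Delta mX π x) = 1) := by
    rintro ⟨had, htriv⟩
    exact ⟨had, fun x hx => delta_one h𝓔 hCG hπ hπE hx (had x hx) (htriv x hx)⟩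
  have h23 : (IsAdaptedK mX 𝓔 π ∧ ∀ x ∈ qpkSupp mX π, π x (Delta mX π x) = 1) →
      (IsAdaptedK mX 𝓔 π ∧ IsProperK mX (NSigma mX π) π) := by
    rintro ⟨had, hone⟩
    exact ⟨had, proper_N hCG hπ hone⟩
  have h32 : (IsAdaptedK mX 𝓔 π ∧ IsProperK mX (NSigma mX π) π) →
      (IsAdaptedK mX 𝓔 π ∧ ∀ x ∈ qpkSupp mX π, π x (Delta mX π x) = 1) := by
    rintro ⟨had, hp⟩
    refine ⟨had, fun x hx => ?_⟩
    have h := hp (Delta mX π x) Set.univ (delta_mem_N hCG hπ hx) MeasurableSet.univ x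
    rw [Set.inter_univ] at h
    have hxΔ : x ∈ Delta mX π x := ⟨hx, rfl⟩
    rw [h]
    exact (Set.indicator_of_mem (s := Delta mX π x) hxΔ _).trans hx
  have h24 : (IsAdaptedK mX 𝓔 π ∧ ∀ x ∈ qpkSupp mX π, π x (Delta mX π x) = 1) →
      (IsProperK mX (𝓔 ⊓ NSigma mX π) π ∧ J mX (𝓔 ⊓ NSigma mX π) π = J mX 𝓔 π) := by
    rintro ⟨had, hone⟩
    have htriv : ∀ x ∈ qpkSupp mX π, IsTrivialOn mX 𝓔 (π x) :=
      fun x hx => triv_of_delta_one h𝓔 hCG hπ hx (had x hx) (hone x hx)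
    refine ⟨proper_mono inf_le_right (proper_N hCG hπ hone), ?_⟩
    refine Set.Subset.antisymm ?_ (J_antitone inf_le_left)
    refine J_transfer h𝓔 hπ hENmX htriv ?_ ?_
    · exact MeasurableSpace.measurableSet_inf.2 ⟨supp_meas hπE, supp_meas hmN⟩
    · intro E hE
      exact MeasurableSpace.measurableSet_inf.2
        ⟨level_meas hπE (h𝓔 E hE) 1, level_meas hmN (h𝓔 E hE) 1⟩
  have h42 : (IsProperK mX (𝓔 ⊓ NSigma mX π) π ∧ J mX (𝓔 ⊓ NSigma mX π) π = J mX 𝓔 π) →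
      (IsAdaptedK mX 𝓔 π ∧ ∀ x ∈ qpkSupp mX π, π x (Delta mX π x) = 1) := by
    rintro ⟨hp, hJeq⟩
    have had : IsAdaptedK mX 𝓔 π := fun x hx =>
      hJeq ▸ proper_mem_J hENmX hmEN hp hx
    refine ⟨had, fun x hx => ?_⟩
    have hΔ : MeasurableSet[𝓔 ⊓ NSigma mX π] (Delta mX π x) :=
      MeasurableSpace.measurableSet_inf.2 ⟨delta_meas hCG hπE hx, delta_mem_N hCG hπ hx⟩
    have h := hp (Delta mX π x) Set.univ hΔ MeasurableSet.univ x
    rw [Set.inter_univ] at h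
    have hxΔ : x ∈ Delta mX π x := ⟨hx, rfl⟩
    rw [h]
    exact (Set.indicator_of_mem (s := Delta mX π x) hxΔ _).trans hx
  have h25 : (IsAdaptedK mX 𝓔 π ∧ ∀ x ∈ qpkSupp mX π, π x (Delta mX π x) = 1) →
      (IsProperK mX (Spi mX π) π ∧ J mX (Spi mX π) π = J mX 𝓔 π) := by
    rintro ⟨had, hone⟩
    have htriv : ∀ x ∈ qpkSupp mX π, IsTrivialOn mX 𝓔 (π x) :=
      fun x hx => triv_of_delta_one h𝓔 hCG hπ hx (had x hx) (hone x hx)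
    refine ⟨proper_mono hSpiN (proper_N hCG hπ hone), ?_⟩
    refine Set.Subset.antisymm ?_ (J_antitone hSpiE)
    refine J_transfer h𝓔 hπ hSpimX htriv (supp_meas hmSpi) ?_
    intro E hE
    exact level_meas hmSpi (h𝓔 E hE) 1
  have h52 : (IsProperK mX (Spi mX π) π ∧ J mX (Spi mX π) π = J mX 𝓔 π) →
      (IsAdaptedK mX 𝓔 π ∧ ∀ x ∈ qpkSupp mX π, π x (Delta mX π x) = 1) := by
    rintro ⟨hp, hJeq⟩
    have had : IsAdaptedK mX 𝓔 π := fun x hx =>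
      hJeq ▸ proper_mem_J hSpimX hmSpi hp hx
    refine ⟨had, fun x hx => ?_⟩
    have hΔ : MeasurableSet[Spi mX π] (Delta mX π x) := delta_meas hCG hmSpi hx
    have h := hp (Delta mX π x) Set.univ hΔ MeasurableSet.univ x
    rw [Set.inter_univ] at h
    have hxΔ : x ∈ Delta mX π x := ⟨hx, rfl⟩
    rw [h]
    exact (Set.indicator_of_mem (s := Delta mX π x) hxΔ _).trans hx
  refine List.tfae_of_forall
    (IsAdaptedK mX 𝓔 π ∧ ∀ x ∈ qpkSupp mX π, π x (Delta mX π x) = 1) _ fun p hp => ?_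
  simp only [List.mem_cons, List.not_mem_nil, or_false] at hp
  rcases hp with rfl | rfl | rfl | rfl | rfl
  · exact ⟨h12, h21⟩
  · exact Iff.rfl
  · exact ⟨h32, h23⟩
  · exact ⟨h42, h24⟩
  · exact ⟨h52, h25⟩
end

section
/- Let π be an 𝓔-measurable quasi-probability kernel and μ ∈ J_𝓔(π). Then μ is an extreme point of the convex set J_𝓔(π) (i.e. whenever μ = a·μ₁ + (1−a)·μ₂ with μ₁, μ₂ ∈ J_𝓔(π) and 0 < a < 1, then μ₁ = μ₂ = μ) if and only if μ is trivial on 𝓔. -/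
open MeasureTheory
open scoped ENNReal

variable {X : Type*}

/-- If `μ` is trivial on `𝓔`, `ν ∈ J_𝓔(π)`, and `ν` vanishes on all `μ`-null sets of `𝓔`,
then `ν = μ`, provided `μ ∈ J_𝓔(π)`. -/
lemma auxEq (mX 𝓔 : MeasurableSpace X) (h𝓔 : 𝓔 ≤ mX)
    (π : X → @Measure X mX) (hπE : EMeasK mX 𝓔 π)
    (μ ν : @Measure X mX) (hμ : μ ∈ J mX 𝓔 π) (hν : ν ∈ J mX 𝓔 π)
    (htriv : IsTrivialOn mX 𝓔 μ)
    (hac : ∀ E : Set X, MeasurableSet[𝓔] E → μ E = 0 → ν E = 0) : ν = μ := by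
  haveI : IsProbabilityMeasure μ := hμ.1
  haveI : IsProbabilityMeasure ν := hν.1
  have hE : ∀ E : Set X, MeasurableSet[𝓔] E → ν E = μ E := by
    intro E hEm
    rcases htriv E hEm with h0 | h1
    · rw [h0, hac E hEm h0]
    · have hμc : μ Eᶜ = 0 := by
        rw [measure_compl (h𝓔 E hEm) (measure_ne_top μ E), h1, measure_univ, tsub_self]
      have hνc : ν Eᶜ = 0 := hac Eᶜ hEm.compl hμc
      have : ν E = 1 := by
        have := measure_compl (h𝓔 E hEm) (measure_ne_top ν E)
        rw [hνc, measure_univ] at this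
        have hle : ν E ≤ 1 := prob_le_one
        have h1le : (1 : ℝ≥0∞) ≤ ν E := tsub_eq_zero_iff_le.mp this.symm
        exact le_antisymm hle h1le
      rw [this, h1]
  have htrim : ν.trim h𝓔 = μ.trim h𝓔 := by
    refine @Measure.ext X 𝓔 _ _ fun s hs => ?_
    rw [trim_measurableSet_eq h𝓔 hs, trim_measurableSet_eq h𝓔 hs, hE s hs]
  refine @Measure.ext X mX _ _ fun F hF => ?_
  have hνF : ν F = ∫⁻ x, π x F ∂ν := by
    have := hν.2 Set.univ F MeasurableSet.univ hF
    rwa [Set.univ_inter, Measure.restrict_univ] at this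
  have hμF : μ F = ∫⁻ x, π x F ∂μ := by
    have := hμ.2 Set.univ F MeasurableSet.univ hF
    rwa [Set.univ_inter, Measure.restrict_univ] at this
  rw [hνF, hμF, ← lintegral_trim h𝓔 (hπE F hF), ← lintegral_trim h𝓔 (hπE F hF), htrim]

/-- The conditional measure of `μ ∈ J_𝓔(π)` on `E ∈ 𝓔` is again in `J_𝓔(π)`. -/
lemma condJ (mX 𝓔 : MeasurableSpace X) (h𝓔 : 𝓔 ≤ mX)
    (π : X → @Measure X mX)
    (μ : @Measure X mX) (hμ : μ ∈ J mX 𝓔 π) (E : Set X) (hE : MeasurableSet[𝓔] E)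
    (h0 : μ E ≠ 0) : (μ E)⁻¹ • μ.restrict E ∈ J mX 𝓔 π := by
  haveI : IsProbabilityMeasure μ := hμ.1
  constructor
  · refine ⟨?_⟩
    rw [Measure.smul_apply, Measure.restrict_apply MeasurableSet.univ, Set.univ_inter,
      smul_eq_mul, ENNReal.inv_mul_cancel h0 (measure_ne_top μ E)]
  · intro E' F hE' hF
    have hE'm : MeasurableSet[mX] E' := h𝓔 E' hE'
    have hEm : MeasurableSet[mX] E := h𝓔 E hE
    rw [Measure.smul_apply, Measure.restrict_apply (hE'm.inter hF), smul_eq_mul,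
      Set.inter_right_comm, hμ.2 (E' ∩ E) F (hE'.inter hE) hF,
      Measure.restrict_smul, lintegral_smul_measure,
      Measure.restrict_restrict hE'm, smul_eq_mul]

/-- `μ ∈ J_𝓔(π)` is an extreme point of the convex set `J_𝓔(π)` iff `μ` is
trivial on `𝓔`. -/
theorem stmt14 (mX : MeasurableSpace X) (hCG : @MeasurableSpace.CountablyGenerated X mX)
    (𝓔 : MeasurableSpace X) (h𝓔 : 𝓔 ≤ mX)
    (π : X → @Measure X mX) (hπ : IsQPK mX π) (hπE : EMeasK mX 𝓔 π)
    (μ : @Measure X mX) (hμ : μ ∈ J mX 𝓔 π) :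
    (∀ (a : ℝ≥0∞) (μ₁ μ₂ : @Measure X mX), μ₁ ∈ J mX 𝓔 π → μ₂ ∈ J mX 𝓔 π →
        0 < a → a < 1 → μ = a • μ₁ + (1 - a) • μ₂ → μ₁ = μ ∧ μ₂ = μ) ↔
      IsTrivialOn mX 𝓔 μ := by
  haveI : IsProbabilityMeasure μ := hμ.1
  constructor
  · intro hext
    by_contra hnt
    simp only [IsTrivialOn, not_forall] at hnt
    obtain ⟨E, hE, hne⟩ := hnt
    push_neg at hne
    obtain ⟨h0, h1⟩ := hne
    have hEm : MeasurableSet[mX] E := h𝓔 E hE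
    have hlt1 : μ E < 1 := lt_of_le_of_ne prob_le_one h1
    have hcne : μ Eᶜ ≠ 0 := by
      rw [measure_compl hEm (measure_ne_top μ E), measure_univ]
      simp only [ne_eq, tsub_eq_zero_iff_le, not_le]
      exact hlt1
    set μ₁ := (μ E)⁻¹ • μ.restrict E with hμ₁
    set μ₂ := (μ Eᶜ)⁻¹ • μ.restrict Eᶜ with hμ₂
    have hμ₁J : μ₁ ∈ J mX 𝓔 π := condJ mX 𝓔 h𝓔 π μ hμ E hE h0
    have hμ₂J : μ₂ ∈ J mX 𝓔 π := condJ mX 𝓔 h𝓔 π μ hμ Eᶜ hE.compl hcne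
    have hdecomp : μ = μ E • μ₁ + (1 - μ E) • μ₂ := by
      have h1' : μ E • μ₁ = μ.restrict E := by
        rw [hμ₁, smul_smul, ENNReal.mul_inv_cancel h0 (measure_ne_top μ E), one_smul]
      have hc : (1 : ℝ≥0∞) - μ E = μ Eᶜ := by
        rw [measure_compl hEm (measure_ne_top μ E), measure_univ]
      have h2' : (1 - μ E) • μ₂ = μ.restrict Eᶜ := by
        rw [hc, hμ₂, smul_smul, ENNReal.mul_inv_cancel hcne (measure_ne_top μ Eᶜ), one_smul]
      rw [h1', h2', Measure.restrict_add_restrict_compl hEm]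
    have := hext (μ E) μ₁ μ₂ hμ₁J hμ₂J (pos_iff_ne_zero.mpr h0) hlt1 hdecomp
    have hμ₁E : μ₁ E = 1 := by
      rw [hμ₁, Measure.smul_apply, Measure.restrict_apply hEm, Set.inter_self,
        smul_eq_mul, ENNReal.inv_mul_cancel h0 (measure_ne_top μ E)]
    rw [this.1] at hμ₁E
    exact h1 hμ₁E
  · intro htriv a μ₁ μ₂ hμ₁ hμ₂ ha0 ha1 hdec
    have key : ∀ (b : ℝ≥0∞) (ν ν' : @Measure X mX), b ≠ 0 → ν ∈ J mX 𝓔 π →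
        μ = b • ν + ν' → ν = μ := by
      intro b ν ν' hb hνJ hμeq
      refine auxEq mX 𝓔 h𝓔 π hπE μ ν hμ hνJ htriv ?_
      intro E hE hμE0
      have : (b • ν + ν') E = 0 := by rw [← hμeq]; exact hμE0
      rw [Measure.add_apply, Measure.smul_apply, smul_eq_mul] at this
      have hb0 : b * ν E = 0 := by
        have := add_eq_zero.mp this
        exact this.1
      rcases mul_eq_zero.mp hb0 with h | h
      · exact absurd h hb
      · exact h
    have h1 : μ₁ = μ := key a μ₁ ((1 - a) • μ₂) (pos_iff_ne_zero.mp ha0) hμ₁ hdec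
    have h2 : μ₂ = μ := by
      refine key (1 - a) μ₂ (a • μ₁) ?_ hμ₂ ?_
      · simp only [ne_eq, tsub_eq_zero_iff_le, not_le]
        exact ha1
      · rw [hdec, add_comm]
    exact ⟨h1, h2⟩
end

section
/- Let π be an 𝓔-measurable quasi-probability kernel, μ ∈ J_𝓔(π), and h a bounded nonnegative 𝓕-measurable function with ∫ h dμ = 1. Then the probability measure μ·h defined by (μ·h)(F) = ∫_F h dμ belongs to J_𝓔(π) if and only if there exists a bounded nonnegative 𝓔-measurable function h' such that ∫ h·f dμ = ∫ h'·f dμ for every bounded nonnegative 𝓕-measurable f. Moreover, in that case one may take h' = π(h), i.e. h'(x) = ∫ h(y) π(x,dy). -/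
open MeasureTheory
open scoped ENNReal

variable {X : Type*}

section Aux

variable {𝓔 : MeasurableSpace X} [mX : MeasurableSpace X]

/-- measurability of `x ↦ ∫ f dπ(x)`. -/
lemma aux_piK_meas {π : X → Measure X} (hπE : EMeasK mX 𝓔 π)
    {f : X → ℝ≥0∞} (hf : Measurable f) :
    Measurable[𝓔] fun x => ∫⁻ y, f y ∂(π x) := by
  refine Measurable.ennreal_induction
    (motive := fun g => Measurable[𝓔] fun x => ∫⁻ y, g y ∂(π x))
    (fun c s hs => ?_) (fun f g hdisj hf hg Pf Pg => ?_) (fun f hfm hmono Pf => ?_) hf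
  · simp_rw [lintegral_indicator_const hs]
    exact (hπE s hs).const_mul c
  · have : (fun x => ∫⁻ y, (f + g) y ∂(π x))
        = fun x => (∫⁻ y, f y ∂(π x)) + ∫⁻ y, g y ∂(π x) := by
      ext x; exact lintegral_add_left hf _
    beta_reduce
    rw [this]
    exact Pf.add Pg
  · have : (fun x => ∫⁻ y, ⨆ n, f n y ∂(π x))
        = fun x => ⨆ n, ∫⁻ y, f n y ∂(π x) := by
      ext x; exact lintegral_iSup hfm hmono
    beta_reduce
    rw [this]
    exact Measurable.iSup Pf

/-- `π(·,F)` is a conditional expectation of `1_F` under any `μ ∈ J`. -/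
lemma aux_lemA (h𝓔 : 𝓔 ≤ mX) {π : X → Measure X}
    (hπ : IsQPK mX π) {μ : Measure X} (hμ : μ ∈ J mX 𝓔 π)
    {F : Set X} (hF : MeasurableSet F)
    {ψ : X → ℝ≥0∞} (hψ : Measurable[𝓔] ψ) :
    ∫⁻ x in F, ψ x ∂μ = ∫⁻ x, ψ x * π x F ∂μ := by
  have hπF : Measurable fun x => π x F := hπ.1 F hF
  have htrim : (μ.restrict F).trim h𝓔 = (μ.withDensity fun x => π x F).trim h𝓔 := by
    refine @Measure.ext _ 𝓔 _ _ fun E hE => ?_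
    rw [trim_measurableSet_eq h𝓔 hE, trim_measurableSet_eq h𝓔 hE,
      Measure.restrict_apply (h𝓔 E hE), withDensity_apply _ (h𝓔 E hE)]
    exact hμ.2 E F hE hF
  calc ∫⁻ x in F, ψ x ∂μ = ∫⁻ x, ψ x ∂((μ.restrict F).trim h𝓔) :=
        (lintegral_trim h𝓔 hψ).symm
    _ = ∫⁻ x, ψ x ∂((μ.withDensity fun x => π x F).trim h𝓔) := by rw [htrim]
    _ = ∫⁻ x, ψ x ∂(μ.withDensity fun x => π x F) := lintegral_trim h𝓔 hψ
    _ = ∫⁻ x, ((fun x => π x F) * ψ) x ∂μ :=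
        lintegral_withDensity_eq_lintegral_mul μ hπF (hψ.mono h𝓔 le_rfl)
    _ = ∫⁻ x, ψ x * π x F ∂μ := by simp [mul_comm]

/-- Key lemma: conditional-expectation identity against `𝓔`-measurable weights. -/
lemma aux_lemK (h𝓔 : 𝓔 ≤ mX) {π : X → Measure X}
    (hπ : IsQPK mX π) (hπE : EMeasK mX 𝓔 π) {μ : Measure X} (hμ : μ ∈ J mX 𝓔 π)
    {ψ : X → ℝ≥0∞} (hψ : Measurable[𝓔] ψ)
    {f : X → ℝ≥0∞} (hf : Measurable f) :
    ∫⁻ x, ψ x * f x ∂μ = ∫⁻ x, ψ x * ∫⁻ y, f y ∂(π x) ∂μ := by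
  have hψm : Measurable ψ := hψ.mono h𝓔 le_rfl
  refine Measurable.ennreal_induction
    (motive := fun g => ∫⁻ x, ψ x * g x ∂μ = ∫⁻ x, ψ x * ∫⁻ y, g y ∂(π x) ∂μ)
    (fun c s hs => ?_) (fun f g hdisj hf hg Pf Pg => ?_) (fun f hfm hmono Pf => ?_) hf
  · have hpt : ∀ x, ψ x * Set.indicator s (fun _ => c) x
        = c * Set.indicator s ψ x := by
      intro x
      by_cases hx : x ∈ s <;> simp [Set.indicator_apply, hx, mul_comm]
    simp_rw [hpt, lintegral_indicator_const hs]
    rw [lintegral_const_mul c (hψm.indicator hs), lintegral_indicator hs,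
      aux_lemA h𝓔 hπ hμ hs hψ, ← lintegral_const_mul c (show Measurable fun x => ψ x * π x s from hψm.mul (hπ.1 s hs))]
    congr 1; ext x; ring
  · have h1 : ∀ x, ψ x * (f + g) x = ψ x * f x + ψ x * g x := by
      intro x; simp [mul_add]
    have h2 : ∀ x, (∫⁻ y, (f + g) y ∂(π x)) = (∫⁻ y, f y ∂(π x)) + ∫⁻ y, g y ∂(π x) :=
      fun x => lintegral_add_left hf _
    simp_rw [h1, h2, mul_add]
    rw [lintegral_add_left (show Measurable fun x => ψ x * f x from hψm.mul hf), lintegral_add_left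
      (show Measurable fun x => ψ x * ∫⁻ y, f y ∂(π x) from
        hψm.mul ((aux_piK_meas hπE hf).mono h𝓔 le_rfl)), Pf, Pg]
  · have h1 : ∀ x, ψ x * ⨆ n, f n x = ⨆ n, ψ x * f n x := fun x => by rw [ENNReal.mul_iSup]
    have h2 : ∀ x, (∫⁻ y, ⨆ n, f n y ∂(π x)) = ⨆ n, ∫⁻ y, f n y ∂(π x) :=
      fun x => lintegral_iSup hfm hmono
    have h3 : ∀ x, ψ x * ⨆ n, (∫⁻ y, f n y ∂(π x)) = ⨆ n, ψ x * ∫⁻ y, f n y ∂(π x) :=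
      fun x => by rw [ENNReal.mul_iSup]
    simp_rw [h1, h2, h3]
    rw [lintegral_iSup (fun n => (show Measurable fun x => ψ x * f n x from hψm.mul (hfm n)))
      (fun i j hij x => mul_le_mul_right (hmono hij x) _),
      lintegral_iSup (fun n => (show Measurable fun x => ψ x * ∫⁻ y, f n y ∂(π x) from
        hψm.mul ((aux_piK_meas hπE (hfm n)).mono h𝓔 le_rfl)))
      (fun i j hij x => mul_le_mul_right (lintegral_mono fun y => hmono hij y) _)]
    exact iSup_congr Pf

end Aux

/-- for `μ ∈ J_𝓔(π)` and bounded measurable `h ≥ 0` with `∫ h dμ = 1`, the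
probability measure `μ·h` (given by `(μ·h)(F) = ∫_F h dμ`, i.e. `μ.withDensity h`) lies in
`J_𝓔(π)` iff there is a bounded `𝓔`-measurable `h'` with `∫ h·f dμ = ∫ h'·f dμ` for all
bounded measurable `f`; moreover in that case one may take `h' = π(h)`. -/
theorem stmt15 (mX : MeasurableSpace X) (hCG : @MeasurableSpace.CountablyGenerated X mX)
    (𝓔 : MeasurableSpace X) (h𝓔 : 𝓔 ≤ mX)
    (π : X → @Measure X mX) (hπ : IsQPK mX π) (hπE : EMeasK mX 𝓔 π)
    (μ : @Measure X mX) (hμ : μ ∈ J mX 𝓔 π)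
    (h : X → ℝ≥0∞) (hhm : Measurable[mX] h) (hhb : ∃ C : ℝ≥0∞, C ≠ ⊤ ∧ ∀ x, h x ≤ C)
    (hh1 : ∫⁻ x, h x ∂μ = 1) :
    (μ.withDensity h ∈ J mX 𝓔 π ↔
        ∃ h' : X → ℝ≥0∞, Measurable[𝓔] h' ∧ (∃ C : ℝ≥0∞, C ≠ ⊤ ∧ ∀ x, h' x ≤ C) ∧
          ∀ f : X → ℝ≥0∞, Measurable[mX] f → (∃ C : ℝ≥0∞, C ≠ ⊤ ∧ ∀ x, f x ≤ C) →
            ∫⁻ x, h x * f x ∂μ = ∫⁻ x, h' x * f x ∂μ) ∧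
      (μ.withDensity h ∈ J mX 𝓔 π →
        ∀ f : X → ℝ≥0∞, Measurable[mX] f → (∃ C : ℝ≥0∞, C ≠ ⊤ ∧ ∀ x, f x ≤ C) →
          ∫⁻ x, h x * f x ∂μ = ∫⁻ x, (∫⁻ y, h y ∂(π x)) * f x ∂μ) := by
  letI : MeasurableSpace X := mX
  have hπhE : Measurable[𝓔] fun x => ∫⁻ y, h y ∂(π x) := aux_piK_meas hπE hhm
  have hπbound : ∀ x, π x Set.univ ≤ 1 := fun x => by
    rcases hπ.2 x with h0 | h0 <;> simp [h0]
  obtain ⟨C, hC, hCb⟩ := hhb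
  have hπhb : ∀ x, (∫⁻ y, h y ∂(π x)) ≤ C := by
    intro x
    calc (∫⁻ y, h y ∂(π x)) ≤ ∫⁻ y, C ∂(π x) := lintegral_mono fun y => hCb y
      _ = C * π x Set.univ := lintegral_const C
      _ ≤ C * 1 := mul_le_mul_right (hπbound x) C
      _ = C := mul_one C
  -- forward direction machine
  have fwd : μ.withDensity h ∈ J mX 𝓔 π → ∀ f : X → ℝ≥0∞, Measurable[mX] f →
      ∫⁻ x, h x * f x ∂μ = ∫⁻ x, (∫⁻ y, h y ∂(π x)) * f x ∂μ := by
    intro hJh f hf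
    have hπfE : Measurable[𝓔] fun x => ∫⁻ y, f y ∂(π x) := aux_piK_meas hπE hf
    have hπfm : Measurable[mX] fun x => ∫⁻ y, f y ∂(π x) := hπfE.mono h𝓔 le_rfl
    have e1 : ∫⁻ x, f x ∂(μ.withDensity h)
        = ∫⁻ x, ∫⁻ y, f y ∂(π x) ∂(μ.withDensity h) := by
      simpa using aux_lemK (mX := mX) h𝓔 hπ hπE hJh
        (ψ := fun _ => (1 : ℝ≥0∞)) measurable_const hf
    have e2 : ∫⁻ x, f x ∂(μ.withDensity h) = ∫⁻ x, h x * f x ∂μ :=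
      lintegral_withDensity_eq_lintegral_mul μ hhm hf
    have e3 : ∫⁻ x, ∫⁻ y, f y ∂(π x) ∂(μ.withDensity h)
        = ∫⁻ x, h x * ∫⁻ y, f y ∂(π x) ∂μ :=
      lintegral_withDensity_eq_lintegral_mul μ hhm hπfm
    have step2 : ∫⁻ x, (∫⁻ y, f y ∂(π x)) * h x ∂μ
        = ∫⁻ x, (∫⁻ y, f y ∂(π x)) * ∫⁻ y, h y ∂(π x) ∂μ :=
      aux_lemK (mX := mX) h𝓔 hπ hπE hμ hπfE hhm
    have step3 : ∫⁻ x, (∫⁻ y, h y ∂(π x)) * f x ∂μ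
        = ∫⁻ x, (∫⁻ y, h y ∂(π x)) * ∫⁻ y, f y ∂(π x) ∂μ :=
      aux_lemK (mX := mX) h𝓔 hπ hπE hμ hπhE hf
    calc ∫⁻ x, h x * f x ∂μ = ∫⁻ x, h x * ∫⁻ y, f y ∂(π x) ∂μ := by
          rw [← e2, e1, e3]
      _ = ∫⁻ x, (∫⁻ y, f y ∂(π x)) * h x ∂μ := by simp_rw [mul_comm]
      _ = ∫⁻ x, (∫⁻ y, f y ∂(π x)) * ∫⁻ y, h y ∂(π x) ∂μ := step2
      _ = ∫⁻ x, (∫⁻ y, h y ∂(π x)) * ∫⁻ y, f y ∂(π x) ∂μ := by simp_rw [mul_comm]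
      _ = ∫⁻ x, (∫⁻ y, h y ∂(π x)) * f x ∂μ := step3.symm
  -- backward direction
  have bwd : (∃ h' : X → ℝ≥0∞, Measurable[𝓔] h' ∧ (∃ C : ℝ≥0∞, C ≠ ⊤ ∧ ∀ x, h' x ≤ C) ∧
      ∀ f : X → ℝ≥0∞, Measurable[mX] f → (∃ C : ℝ≥0∞, C ≠ ⊤ ∧ ∀ x, f x ≤ C) →
        ∫⁻ x, h x * f x ∂μ = ∫⁻ x, h' x * f x ∂μ) → μ.withDensity h ∈ J mX 𝓔 π := by
    rintro ⟨h', hh'E, -, hQ⟩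
    have hh'm : Measurable[mX] h' := hh'E.mono h𝓔 le_rfl
    constructor
    · constructor
      rw [withDensity_apply _ MeasurableSet.univ, Measure.restrict_univ]
      exact hh1
    · intro E F hE hF
      have hEm : MeasurableSet[mX] E := h𝓔 E hE
      have hEFm : MeasurableSet[mX] (E ∩ F) := hEm.inter hF
      set f1 : X → ℝ≥0∞ := (E ∩ F).indicator fun _ => 1 with hf1def
      have hf1m : Measurable[mX] f1 := measurable_const.indicator hEFm
      have hf1b : ∀ x, f1 x ≤ 1 := fun x => by
        by_cases hx : x ∈ E ∩ F <;> simp [hf1def, Set.indicator_apply, hx]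
      set ψ : X → ℝ≥0∞ := E.indicator h' with hψdef
      have hψE : Measurable[𝓔] ψ := hh'E.indicator hE
      set f2 : X → ℝ≥0∞ := E.indicator fun y => π y F with hf2def
      have hf2m : Measurable[mX] f2 := (hπ.1 F hF).indicator hEm
      have hf2b : ∀ x, f2 x ≤ 1 := fun x => by
        by_cases hx : x ∈ E
        · simp only [hf2def, Set.indicator_of_mem hx]
          exact le_trans (measure_mono (Set.subset_univ F)) (hπbound x)
        · simp [hf2def, Set.indicator_of_notMem hx]
      have pt1 : ∀ x, h x * f1 x = (E ∩ F).indicator h x := fun x => by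
        by_cases hx : x ∈ E ∩ F <;> simp [hf1def, Set.indicator_apply, hx]
      have pt2 : ∀ x, h' x * f1 x = F.indicator ψ x := fun x => by
        by_cases hxE : x ∈ E <;> by_cases hxF : x ∈ F <;>
          simp [hf1def, hψdef, Set.indicator_apply, hxE, hxF]
      have pt3 : ∀ x, ψ x * π x F = h' x * f2 x := fun x => by
        by_cases hx : x ∈ E <;> simp [hψdef, hf2def, Set.indicator_apply, hx]
      have pt4 : ∀ x, h x * f2 x = E.indicator (fun y => h y * π y F) x := fun x => by
        by_cases hx : x ∈ E <;> simp [hf2def, Set.indicator_apply, hx]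
      calc (μ.withDensity h) (E ∩ F) = ∫⁻ x in E ∩ F, h x ∂μ :=
            withDensity_apply _ hEFm
        _ = ∫⁻ x, (E ∩ F).indicator h x ∂μ := (lintegral_indicator hEFm h).symm
        _ = ∫⁻ x, h x * f1 x ∂μ := by simp_rw [pt1]
        _ = ∫⁻ x, h' x * f1 x ∂μ := hQ f1 hf1m ⟨1, ENNReal.one_ne_top, hf1b⟩
        _ = ∫⁻ x, F.indicator ψ x ∂μ := by simp_rw [pt2]
        _ = ∫⁻ x in F, ψ x ∂μ := lintegral_indicator hF ψ
        _ = ∫⁻ x, ψ x * π x F ∂μ := aux_lemA (mX := mX) h𝓔 hπ hμ hF hψE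
        _ = ∫⁻ x, h' x * f2 x ∂μ := by simp_rw [pt3]
        _ = ∫⁻ x, h x * f2 x ∂μ := (hQ f2 hf2m ⟨1, ENNReal.one_ne_top, hf2b⟩).symm
        _ = ∫⁻ x, E.indicator (fun y => h y * π y F) x ∂μ := by simp_rw [pt4]
        _ = ∫⁻ x in E, h x * π x F ∂μ := lintegral_indicator hEm _
        _ = ∫⁻ x in E, π x F ∂(μ.withDensity h) := by
            rw [restrict_withDensity hEm,
              lintegral_withDensity_eq_lintegral_mul _ hhm (hπ.1 F hF)]
            rfl
  exact ⟨⟨fun hJh => ⟨_, hπhE, ⟨C, hC, hπhb⟩, fun f hf _ => fwd hJh f hf⟩, bwd⟩,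
    fun hJh f hf _ => fwd hJh f hf⟩
end

section
/- If π is a proper 𝓔-measurable quasi-probability kernel, then the trace σ-algebra 𝓔|_{S_π} on the support S_π is countably generated. -/
open MeasureTheory
open scoped ENNReal

variable {X : Type*}

/-- if `π` is proper then the trace σ-algebra `𝓔|_{S_π}` is countably
generated. -/
theorem stmt16 (mX : MeasurableSpace X) (hCG : @MeasurableSpace.CountablyGenerated X mX)
    (𝓔 : MeasurableSpace X) (h𝓔 : 𝓔 ≤ mX)
    (π : X → @Measure X mX) (hπ : IsQPK mX π) (hπE : EMeasK mX 𝓔 π)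
    (hprop : IsProperK mX 𝓔 π) :
    @MeasurableSpace.CountablyGenerated (↥(qpkSupp mX π))
      (MeasurableSpace.comap (Subtype.val : qpkSupp mX π → X) 𝓔) := by
  classical
  obtain ⟨b, hbc, hbgen⟩ := hCG.isCountablyGenerated
  set s : Set (Set X) := generatePiSystem b with hs
  have hsub : s ⊆ (fun T => ⋂₀ T) '' {t | Set.Finite t ∧ t ⊆ b} := by
    intro t ht
    induction ht with
    | base h =>
      exact ⟨{_}, ⟨Set.finite_singleton _, Set.singleton_subset_iff.2 h⟩, Set.sInter_singleton _⟩
    | inter h1 h2 hne ih1 ih2 =>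
      obtain ⟨T1, ⟨hT1f, hT1b⟩, rfl⟩ := ih1
      obtain ⟨T2, ⟨hT2f, hT2b⟩, rfl⟩ := ih2
      exact ⟨T1 ∪ T2, ⟨hT1f.union hT2f, Set.union_subset hT1b hT2b⟩,
        by simp [Set.sInter_union]⟩
  have hsc : s.Countable :=
    ((Set.countable_setOf_finite_subset hbc).image _).mono hsub
  have hsgen : mX = MeasurableSpace.generateFrom s := by
    rw [hbgen, hs, generateFrom_generatePiSystem_eq]
  have hmem : ∀ t ∈ s, MeasurableSet[mX] t := fun t ht => by
    rw [hsgen]; exact MeasurableSpace.measurableSet_generateFrom ht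
  have := hsc.to_subtype
  set S := qpkSupp mX π with hS
  -- the evaluation map into a countable product
  set g : ↥S → (↥s → ℝ≥0∞) := fun y F => π y.val F.val with hg
  set m₀ : MeasurableSpace ↥S := MeasurableSpace.comap g inferInstance with hm₀
  have hguniv : ∀ y : ↥S, π (y : X) Set.univ = 1 := fun y => y.2
  have hgmeas : Measurable[m₀] g := fun u hu => ⟨u, hu, rfl⟩
  -- all functions π(·,F), F ∈ mX, are m₀-measurable on S
  have hmeasF : ∀ F : Set X, MeasurableSet[mX] F →
      Measurable[m₀] fun y : ↥S => π (y : X) F := by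
    intro F hF
    refine @MeasurableSpace.induction_on_inter X mX
      (fun F _ => Measurable[m₀] fun y : ↥S => π (y : X) F) s hsgen
      (isPiSystem_generatePiSystem b) ?_ ?_ ?_ ?_ F hF
    · simp only [measure_empty]
      exact measurable_const
    · intro t ht
      exact (measurable_pi_apply (⟨t, ht⟩ : ↥s)).comp hgmeas
    · intro t htm hC
      have h1 : ∀ y : ↥S, π (y : X) tᶜ = 1 - π (y : X) t := by
        intro y
        rw [measure_compl htm, hguniv y]
        exact ne_top_of_le_ne_top (by simp) ((measure_mono (Set.subset_univ t)).trans
          (hguniv y).le)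
      simp only [h1]
      exact Measurable.sub measurable_const hC
    · intro f hdisj hmeas hC
      have h1 : ∀ y : ↥S, π (y : X) (⋃ i, f i) = ∑' i, π (y : X) (f i) :=
        fun y => measure_iUnion hdisj hmeas
      simp only [h1]
      exact Measurable.ennreal_tsum hC
  -- the trace of 𝓔 equals m₀
  have hle1 : m₀ ≤ MeasurableSpace.comap (Subtype.val : ↥S → X) 𝓔 := by
    have hgm : @Measurable _ _ (MeasurableSpace.comap (Subtype.val : ↥S → X) 𝓔) _ g := by
      clear hmeasF hgmeas hm₀
      clear m₀
      refine measurable_pi_iff.2 fun F => ?_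
      intro t ht
      exact ⟨_, hπE F.val (hmem F.val F.2) ht, rfl⟩
    exact fun u hu => by rcases hu with ⟨t, ht, rfl⟩; exact hgm ht
  have hle2 : MeasurableSpace.comap (Subtype.val : ↥S → X) 𝓔 ≤ m₀ := by
    rintro u ⟨E, hE, rfl⟩
    have hkey : (Subtype.val : ↥S → X) ⁻¹' E = (fun y : ↥S => π (y : X) E) ⁻¹' {1} := by
      ext y
      have h1 : π (y : X) E = Set.indicator E (fun _ => π (y : X) Set.univ) (y : X) := by
        rw [← hprop E Set.univ hE MeasurableSet.univ (y : X), Set.inter_univ]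
      by_cases hy : (y : X) ∈ E
      · simp [hy, h1, Set.indicator_of_mem hy, hguniv y]
      · simp [hy, h1, Set.indicator_of_notMem hy]
    show MeasurableSet[m₀] ((Subtype.val : ↥S → X) ⁻¹' E)
    rw [hkey]
    exact hmeasF E (h𝓔 E hE) (measurableSet_singleton 1)
  have heq : MeasurableSpace.comap (Subtype.val : ↥S → X) 𝓔 = m₀ := le_antisymm hle2 hle1
  rw [heq, hm₀]
  exact MeasurableSpace.CountablyGenerated.comap g
end

section
/- Suppose (X, 𝓕) is a standard Borel space. Let {𝓔_n}_{n≥1} be a decreasing sequence of sub-σ-algebras of 𝓕 with each 𝓔_n countably generated, and let μ be a probability measure on (X, 𝓕). Then for each n ≥ 1 there exists a proper 𝓔_n-measurable quasi-probability kernel ρ_n such that ρ_n ρ_m = ρ_n whenever m ≤ n and μ ∈ J_{𝓔_n}(ρ_n) for all n ≥ 1. -/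
open MeasureTheory
open scoped ENNReal

variable {X : Type*}

section StmtAux

open ProbabilityTheory

lemma exists_countable_piSystem (mX : MeasurableSpace X) [MeasurableSpace.CountablyGenerated X] :
    ∃ S : Set (Set X), S.Countable ∧ IsPiSystem S ∧ MeasurableSpace.generateFrom S = mX := by
  classical
  set C := MeasurableSpace.countableGeneratingSet X with hCdef
  refine ⟨{t | ∃ u : Finset (Set X), ↑u ⊆ C ∧ u.Nonempty ∧ t = ⋂₀ ↑u}, ?_, ?_, ?_⟩
  · have h1 : {t | ∃ u : Finset (Set X), ↑u ⊆ C ∧ u.Nonempty ∧ t = ⋂₀ ↑u} ⊆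
        Set.sInter '' {v : Set (Set X) | v.Finite ∧ v ⊆ C} := by
      rintro t ⟨u, hu, -, rfl⟩
      exact ⟨↑u, ⟨u.finite_toSet, hu⟩, rfl⟩
    exact ((Set.countable_setOf_finite_subset
      (MeasurableSpace.countable_countableGeneratingSet (α := X))).image _).mono h1
  · rintro t ⟨u, hu, hune, rfl⟩ s ⟨v, hv, hvne, rfl⟩ -
    refine ⟨u ∪ v, ?_, Finset.Nonempty.mono Finset.subset_union_left hune, ?_⟩
    · rw [Finset.coe_union]; exact Set.union_subset hu hv
    · rw [Finset.coe_union, Set.sInter_union]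
  · refine le_antisymm (MeasurableSpace.generateFrom_le ?_) ?_
    · rintro t ⟨u, hu, -, rfl⟩
      exact Set.Finite.measurableSet_sInter u.finite_toSet fun s hs =>
        MeasurableSpace.measurableSet_countableGeneratingSet (hu hs)
    · rw [← MeasurableSpace.generateFrom_countableGeneratingSet (α := X)]
      refine MeasurableSpace.generateFrom_le fun s hs => ?_
      exact MeasurableSpace.measurableSet_generateFrom
        ⟨{s}, by simpa using hs, ⟨s, Finset.mem_singleton_self s⟩, by simp⟩

lemma exists_atom [mX : MeasurableSpace X] (𝓔 : MeasurableSpace X) (h𝓔 : 𝓔 ≤ mX)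
    {S : Set (Set X)} (hS : S.Countable) (hgen : MeasurableSpace.generateFrom S = 𝓔) (x : X) :
    ∃ A : Set X, x ∈ A ∧ MeasurableSet[𝓔] A ∧
      (∀ E : Set X, MeasurableSet[𝓔] E → x ∈ E → A ⊆ E) ∧
      (∀ ν : @Measure X mX, IsProbabilityMeasure ν →
        (∀ E ∈ S, ν E = Set.indicator E (fun _ => (1 : ℝ≥0∞)) x) → ν A = 1) := by
  classical
  have hSmeas : ∀ E ∈ S, MeasurableSet[𝓔] E := fun E hE =>
    hgen ▸ MeasurableSpace.measurableSet_generateFrom hE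
  set C : Set X → Set X := fun E => if x ∈ E then E else Eᶜ with hC
  have hxC : ∀ E, x ∈ C E := by
    intro E
    by_cases h : x ∈ E <;> simp [hC, h]
  set A : Set X := ⋂ E ∈ S, C E with hA
  have hxA : x ∈ A := Set.mem_iInter₂.2 fun E _ => hxC E
  have hAsub : ∀ E ∈ S, A ⊆ C E := fun E hE => Set.biInter_subset_of_mem hE
  have hCpos : ∀ E, x ∈ E → C E = E := fun E h => by simp only [hC, if_pos h]
  have hCneg : ∀ E, x ∉ E → C E = Eᶜ := fun E h => by simp only [hC, if_neg h]
  have hkey : ∀ E : Set X, MeasurableSet[𝓔] E → A ⊆ E ∨ A ⊆ Eᶜ := by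
    intro E hE
    rw [← hgen] at hE
    refine MeasurableSpace.generateFrom_induction
      (p := fun s _ => A ⊆ s ∨ A ⊆ sᶜ) S ?_ ?_ ?_ ?_ E hE
    · intro t ht _
      by_cases hxt : x ∈ t
      · left; have := hAsub t ht; rwa [hCpos t hxt] at this
      · right; have := hAsub t ht; rwa [hCneg t hxt] at this
    · right; simp
    · rintro t _ (h | h)
      · right; simpa using h
      · left; simpa using h
    · rintro f _ hf
      by_cases hex : ∃ i, A ⊆ f i
      · rcases hex with ⟨i, hi⟩
        exact Or.inl (hi.trans (Set.subset_iUnion f i))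
      · push_neg at hex
        refine Or.inr ?_
        rw [Set.compl_iUnion]
        refine Set.subset_iInter fun i => ?_
        rcases hf i with h | h
        · exact absurd h (hex i)
        · exact h
  have hmeasA : MeasurableSet[𝓔] A := by
    refine MeasurableSet.biInter hS fun E hE => ?_
    by_cases h : x ∈ E
    · rw [hCpos E h]; exact hSmeas E hE
    · rw [hCneg E h]; exact (hSmeas E hE).compl
  refine ⟨A, hxA, hmeasA, ?_, ?_⟩
  · intro E hE hxE
    rcases hkey E hE with h | h
    · exact h
    · exact absurd (h hxA) (by simp [hxE])
  · intro ν hν hval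
    have hcompl : ν Aᶜ = 0 := by
      rw [hA, Set.compl_iInter₂]
      rw [measure_biUnion_null_iff hS]
      intro E hE
      by_cases h : x ∈ E
      · rw [hCpos E h]
        have h1 : ν E = 1 := by rw [hval E hE, Set.indicator_of_mem h]
        have := prob_compl_eq_one_sub (μ := ν) (h𝓔 _ (hSmeas E hE))
        rw [this, h1]; simp
      · rw [hCneg E h, compl_compl]
        rw [hval E hE, Set.indicator_of_notMem h]
    have hmA : MeasurableSet[mX] A := h𝓔 _ hmeasA
    have h2 := measure_add_measure_compl (μ := ν) hmA
    rw [hcompl, add_zero] at h2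
    rw [h2]; exact measure_univ

lemma ae_eq_of_forall_setLIntegral_sub {𝓔 : MeasurableSpace X} [mX : MeasurableSpace X]
    (h𝓔 : 𝓔 ≤ mX) (μ : @Measure X mX) [IsFiniteMeasure μ] {f g : X → ℝ≥0∞}
    (hf : Measurable[𝓔] f) (hg : Measurable[𝓔] g)
    (h : ∀ A : Set X, MeasurableSet[𝓔] A → ∫⁻ x in A, f x ∂μ = ∫⁻ x in A, g x ∂μ) :
    f =ᵐ[μ] g := by
  have htrim : IsFiniteMeasure (μ.trim h𝓔) := isFiniteMeasure_trim h𝓔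
  have key : f =ᵐ[μ.trim h𝓔] g := by
    refine ae_eq_of_forall_setLIntegral_eq_of_sigmaFinite (μ := μ.trim h𝓔) hf hg ?_
    intro s hs _
    rw [restrict_trim h𝓔 μ hs, lintegral_trim h𝓔 hf, lintegral_trim h𝓔 hg]
    exact h s hs
  exact ae_eq_of_ae_eq_trim key

lemma setLIntegral_cek {𝓔 : MeasurableSpace X} [mX : MeasurableSpace X] [StandardBorelSpace X]
    (h𝓔 : 𝓔 ≤ mX) (μ : @Measure X mX) [IsFiniteMeasure μ]
    {E F : Set X} (hE : MeasurableSet[𝓔] E) (hF : MeasurableSet[mX] F) :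
    ∫⁻ x in E, condExpKernel μ 𝓔 x F ∂μ = μ (E ∩ F) := by
  haveI : SigmaFinite (μ.trim h𝓔) := (isFiniteMeasure_trim h𝓔).toSigmaFinite
  have h1 : (fun ω => (condExpKernel μ 𝓔 ω F).toReal) =ᵐ[μ] μ⟦F|𝓔⟧ :=
    condExpKernel_ae_eq_condExp h𝓔 hF
  have hne : ∀ ω, condExpKernel μ 𝓔 ω F ≠ ∞ := fun ω => measure_ne_top _ _
  have hint : Integrable (fun ω => (condExpKernel μ 𝓔 ω F).toReal) μ :=
    integrable_toReal_condExpKernel hF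
  calc ∫⁻ x in E, condExpKernel μ 𝓔 x F ∂μ
      = ∫⁻ x in E, ENNReal.ofReal ((condExpKernel μ 𝓔 x F).toReal) ∂μ := by
        refine lintegral_congr fun x => ?_
        rw [ENNReal.ofReal_toReal (hne x)]
    _ = ENNReal.ofReal (∫ x in E, (condExpKernel μ 𝓔 x F).toReal ∂μ) := by
        rw [← ofReal_integral_eq_lintegral_ofReal hint.restrict
          (Filter.Eventually.of_forall fun x => ENNReal.toReal_nonneg)]
    _ = ENNReal.ofReal (∫ x in E, (μ⟦F|𝓔⟧) x ∂μ) := by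
        congr 1
        exact integral_congr_ae (ae_restrict_of_ae h1)
    _ = ENNReal.ofReal (∫ x in E, F.indicator (fun _ => (1:ℝ)) x ∂μ) := by
        congr 1
        exact setIntegral_condExp h𝓔 ((integrable_const (1:ℝ)).indicator hF) hE
    _ = μ (E ∩ F) := by
        rw [setIntegral_indicator hF, setIntegral_const, smul_eq_mul, mul_one, measureReal_def,
          ENNReal.ofReal_toReal (measure_ne_top μ _), Set.inter_comm]

lemma setLIntegral_lintegral_cek {𝓔 : MeasurableSpace X} [mX : MeasurableSpace X]
    [StandardBorelSpace X]
    (h𝓔 : 𝓔 ≤ mX) (μ : @Measure X mX) [IsFiniteMeasure μ]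
    {A : Set X} (hA : MeasurableSet[𝓔] A) {g : X → ℝ≥0∞} (hg : Measurable[mX] g) :
    ∫⁻ x in A, ∫⁻ y, g y ∂(condExpKernel μ 𝓔 x) ∂μ = ∫⁻ y in A, g y ∂μ := by
  have hmeas : Measurable[mX] (fun x => (condExpKernel μ 𝓔 x : @Measure X mX)) :=
    (Kernel.measurable (condExpKernel μ 𝓔)).mono h𝓔 le_rfl
  have hbind : (μ.restrict A).bind (fun x => (condExpKernel μ 𝓔 x : @Measure X mX))
      = μ.restrict A := by
    refine Measure.ext fun B hB => ?_
    rw [Measure.bind_apply hB hmeas.aemeasurable]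
    rw [setLIntegral_cek h𝓔 μ hA hB, Measure.restrict_apply hB, Set.inter_comm]
  calc ∫⁻ x in A, ∫⁻ y, g y ∂(condExpKernel μ 𝓔 x) ∂μ
      = ∫⁻ y, g y ∂((μ.restrict A).bind (fun x => (condExpKernel μ 𝓔 x : @Measure X mX))) :=
        (Measure.lintegral_bind hmeas.aemeasurable hg.aemeasurable).symm
    _ = ∫⁻ y in A, g y ∂μ := by rw [hbind]

end StmtAux

/-- on a standard Borel space, for a decreasing sequence of countably
generated sub-σ-algebras `𝓔 n` and a probability measure `μ`, there exist proper
`𝓔 n`-measurable quasi-probability kernels `ρ n` with `ρ n ρ m = ρ n` for `m ≤ n` and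
`μ ∈ J_{𝓔 n}(ρ n)` for all `n`. -/
theorem stmt19 [mX : MeasurableSpace X] [StandardBorelSpace X]
    (𝓔 : ℕ → MeasurableSpace X) (h𝓔 : ∀ n, 𝓔 n ≤ mX) (hdec : Antitone 𝓔)
    (hcg : ∀ n, @MeasurableSpace.CountablyGenerated X (𝓔 n))
    (μ : @Measure X mX) (hμ : IsProbabilityMeasure μ) :
    ∃ ρ : ℕ → X → @Measure X mX, ∀ n,
      IsQPK mX (ρ n) ∧ EMeasK mX (𝓔 n) (ρ n) ∧ IsProperK mX (𝓔 n) (ρ n) ∧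
        (∀ m ≤ n, ∀ x : X, ∀ F : Set X, MeasurableSet[mX] F →
          ∫⁻ y, ρ m y F ∂(ρ n x) = ρ n x F) ∧
        μ ∈ J mX (𝓔 n) (ρ n) := by
  classical
  haveI : IsFiniteMeasure μ := inferInstance
  set κ : ℕ → X → @Measure X mX := fun n x => ProbabilityTheory.condExpKernel μ (𝓔 n) x with hκdef
  have hκprob : ∀ n x, IsProbabilityMeasure (κ n x) := fun n x => by
    rw [hκdef]; infer_instance
  have hκuniv : ∀ n x, κ n x Set.univ = 1 := fun n x => (hκprob n x).measure_univ
  have hκle : ∀ n x (F : Set X), κ n x F ≤ 1 := fun n x F => by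
    haveI := hκprob n x; exact prob_le_one
  have hκmeas : ∀ n {F : Set X}, MeasurableSet[mX] F → Measurable[𝓔 n] (fun x => κ n x F) :=
    fun n F hF => ProbabilityTheory.measurable_condExpKernel hF
  have hκJ : ∀ n {E F : Set X}, MeasurableSet[𝓔 n] E → MeasurableSet[mX] F →
      ∫⁻ x in E, κ n x F ∂μ = μ (E ∩ F) := fun n {E F} hE hF => setLIntegral_cek (h𝓔 n) μ hE hF
  have hκint : ∀ n {A : Set X}, MeasurableSet[𝓔 n] A → ∀ {g : X → ℝ≥0∞}, Measurable[mX] g →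
      ∫⁻ x in A, ∫⁻ y, g y ∂(κ n x) ∂μ = ∫⁻ y in A, g y ∂μ :=
    fun n {A} hA {g} hg => setLIntegral_lintegral_cek (h𝓔 n) μ hA hg
  have hκlmeas : ∀ n {g : X → ℝ≥0∞}, Measurable[mX] g →
      Measurable[𝓔 n] (fun x => ∫⁻ y, g y ∂(κ n x)) :=
    fun n {g} hg => (Measure.measurable_lintegral hg).comp
      ((ProbabilityTheory.condExpKernel μ (𝓔 n)).measurable)
  have measEq : ∀ (m' : MeasurableSpace X) (f g : X → ℝ≥0∞), Measurable[m'] f →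
      Measurable[m'] g → MeasurableSet[m'] {x | f x = g x} := by
    intro m' f g hf hg
    have hrw : {x | f x = g x} = {x | f x ≤ g x} ∩ {x | g x ≤ f x} := by
      ext x; simp [le_antisymm_iff]
    rw [hrw]
    exact (measurableSet_le hf hg).inter (measurableSet_le hg hf)
  -- countable generators
  obtain ⟨P, hPc, hPpi, hPgen⟩ := exists_countable_piSystem mX
  have hPmeas : ∀ F ∈ P, MeasurableSet[mX] F := fun F hF =>
    hPgen ▸ MeasurableSpace.measurableSet_generateFrom hF
  set P' : Set (Set X) := insert Set.univ P with hP'def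
  have hP'c : P'.Countable := hPc.insert _
  have hP'meas : ∀ F ∈ P', MeasurableSet[mX] F := by
    rintro F (rfl | hF)
    · exact MeasurableSet.univ
    · exact hPmeas F hF
  set S : ℕ → Set (Set X) := fun n => @MeasurableSpace.countableGeneratingSet X (𝓔 n) (hcg n)
    with hSdef
  have hSc : ∀ n, (S n).Countable := fun n =>
    @MeasurableSpace.countable_countableGeneratingSet X (𝓔 n) (hcg n)
  have hSgen : ∀ n, MeasurableSpace.generateFrom (S n) = 𝓔 n := fun n =>
    @MeasurableSpace.generateFrom_countableGeneratingSet X (𝓔 n) (hcg n)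
  have hSmeas : ∀ n, ∀ E ∈ S n, MeasurableSet[𝓔 n] E := fun n E hE =>
    (hSgen n) ▸ MeasurableSpace.measurableSet_generateFrom hE
  -- atoms
  have hatomEx := fun n (x : X) => exists_atom (𝓔 n) (h𝓔 n) (hSc n) (hSgen n) x
  choose Atom hA1 hA2 hA3 hA4 using hatomEx
  -- indicator of measure-valued function applied to a set
  have hindK : ∀ (D : Set X) (τ : X → @Measure X mX) (y : X) (F : Set X),
      Set.indicator D τ y F = Set.indicator D (fun y => τ y F) y := by
    intro D τ y F
    by_cases h : y ∈ D
    · rw [Set.indicator_of_mem h, Set.indicator_of_mem h]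
    · rw [Set.indicator_of_notMem h, Set.indicator_of_notMem h]
      simp
  -- the properness sets
  set H : ℕ → Set X := fun n =>
    {x | ∀ E ∈ S n, κ n x E = Set.indicator E (fun _ => (1:ℝ≥0∞)) x} with hHdef
  have hHmeas : ∀ n, MeasurableSet[𝓔 n] (H n) := by
    intro n
    have hrw : H n = ⋂ E ∈ S n, {x | κ n x E = Set.indicator E (fun _ => (1:ℝ≥0∞)) x} := by
      ext x; simp [hHdef]
    rw [hrw]
    refine MeasurableSet.biInter (hSc n) fun E hE => ?_
    exact measEq (𝓔 n) _ _ (hκmeas n (h𝓔 n E (hSmeas n E hE)))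
      (measurable_const.indicator (hSmeas n E hE))
  have hHae : ∀ n, ∀ᵐ x ∂μ, x ∈ H n := by
    intro n
    have hone : ∀ E ∈ S n, ∀ᵐ x ∂μ, κ n x E = Set.indicator E (fun _ => (1:ℝ≥0∞)) x := by
      intro E hE
      have hEm : MeasurableSet[𝓔 n] E := hSmeas n E hE
      refine ae_eq_of_forall_setLIntegral_sub (h𝓔 n) μ (hκmeas n (h𝓔 n E hEm))
        (measurable_const.indicator hEm) ?_
      intro A hA
      rw [hκJ n hA (h𝓔 n E hEm), lintegral_indicator (h𝓔 n E hEm), setLIntegral_one,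
        Measure.restrict_apply (h𝓔 n E hEm), Set.inter_comm A E]
    exact (ae_ball_iff (hSc n)).2 hone
  -- full-measure sets via atoms
  have hfull : ∀ n x, x ∈ H n → ∀ E : Set X, MeasurableSet[𝓔 n] E → x ∈ E → κ n x E = 1 := by
    intro n x hH E hE hxE
    have hAx : κ n x (Atom n x) = 1 := hA4 n x (κ n x) (hκprob n x) (fun E hE => hH E hE)
    refine le_antisymm (hκle n x E) ?_
    rw [← hAx]
    exact measure_mono (hA3 n x E hE hxE)
  have hzero : ∀ n x, x ∈ H n → ∀ E : Set X, MeasurableSet[𝓔 n] E → x ∉ E → κ n x E = 0 := by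
    intro n x hH E hE hxE
    have h1 : κ n x Eᶜ = 1 := hfull n x hH Eᶜ hE.compl hxE
    have h2 := measure_add_measure_compl (μ := κ n x) (h𝓔 n E hE)
    rw [h1, hκuniv n x] at h2
    have h3 : κ n x E + 1 = 0 + 1 := by rw [h2, zero_add]
    exact (ENNReal.add_left_inj ENNReal.one_ne_top).1 h3
  -- constancy on atoms
  have hconst : ∀ n x, ∀ y ∈ Atom n x, ∀ F : Set X, MeasurableSet[mX] F →
      κ n y F = κ n x F := by
    intro n x y hy F hF
    have hE : MeasurableSet[𝓔 n] ((fun z => κ n z F) ⁻¹' {κ n x F}) :=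
      hκmeas n hF (measurableSet_singleton _)
    exact hA3 n x _ hE rfl hy
  -- tower sets
  set Tw : ℕ → ℕ → Set X → Set X := fun n m D =>
    {x | ∀ F ∈ P', ∫⁻ y, Set.indicator D (fun y => κ m y F) y ∂(κ n x) = κ n x F} with hTwdef
  have hTwMeas : ∀ n m (D : Set X), MeasurableSet[mX] D → MeasurableSet[𝓔 n] (Tw n m D) := by
    intro n m D hD
    have hrw : Tw n m D = ⋂ F ∈ P',
        {x | ∫⁻ y, Set.indicator D (fun y => κ m y F) y ∂(κ n x) = κ n x F} := by
      ext x; simp [hTwdef]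
    rw [hrw]
    refine MeasurableSet.biInter hP'c fun F hF => ?_
    have hg : Measurable[mX] (Set.indicator D (fun y => κ m y F)) :=
      ((hκmeas m (hP'meas F hF)).mono (h𝓔 m) le_rfl).indicator hD
    exact measEq (𝓔 n) _ _ (hκlmeas n hg) (hκmeas n (hP'meas F hF))
  -- the good sets, by course-of-values recursion
  set Gs : ℕ → ℕ → Set X := fun n =>
    Nat.rec (motive := fun _ => ℕ → Set X) (fun _ => H 0)
      (fun k ih m => if m ≤ k then ih m else
        H (k+1) ∩ ⋂ j, ⋂ (_ : j ≤ k), Tw (k+1) j (ih j)) n with hGsdef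
  set G : ℕ → Set X := fun n => Gs n n with hGdef
  have hGstable : ∀ n m, m ≤ n → Gs n m = G m := by
    intro n
    induction n with
    | zero =>
      intro m hm
      rw [Nat.le_zero.1 hm]
    | succ k ih =>
      intro m hm
      by_cases h : m ≤ k
      · have h1 : Gs (k+1) m = Gs k m := if_pos h
        rw [h1, ih m h]
      · have h2 : m = k + 1 := le_antisymm hm (not_le.1 h)
        rw [h2]
  have hGzero : G 0 = H 0 := rfl
  have hGsucc : ∀ k, G (k+1) = H (k+1) ∩ ⋂ j, ⋂ (_ : j ≤ k), Tw (k+1) j (G j) := by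
    intro k
    have h0 : G (k+1) = if k+1 ≤ k then Gs k (k+1) else
        H (k+1) ∩ ⋂ j, ⋂ (_ : j ≤ k), Tw (k+1) j (Gs k j) := rfl
    rw [h0, if_neg (Nat.not_succ_le_self k)]
    congr 1
    exact Set.iInter_congr fun j => Set.iInter_congr fun hj => by rw [hGstable k j hj]
  -- measurability and fullness of G
  have hGmain : ∀ n, MeasurableSet[𝓔 n] (G n) ∧ (∀ᵐ x ∂μ, x ∈ G n) := by
    intro n
    induction n using Nat.strong_induction_on with
    | _ n ihn =>
      cases n with
      | zero => exact ⟨hHmeas 0, hHae 0⟩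
      | succ k =>
        have hTwAe : ∀ j, j ≤ k → ∀ᵐ x ∂μ, x ∈ Tw (k+1) j (G j) := by
          intro j hj
          have hGj := ihn j (Nat.lt_succ_of_le hj)
          have hGjm : MeasurableSet[mX] (G j) := h𝓔 j _ hGj.1
          have key : ∀ F ∈ P', ∀ᵐ x ∂μ,
              ∫⁻ y, Set.indicator (G j) (fun y => κ j y F) y ∂(κ (k+1) x) = κ (k+1) x F := by
            intro F hF
            have hFm : MeasurableSet[mX] F := hP'meas F hF
            have hg : Measurable[mX] (Set.indicator (G j) (fun y => κ j y F)) :=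
              ((hκmeas j hFm).mono (h𝓔 j) le_rfl).indicator hGjm
            refine ae_eq_of_forall_setLIntegral_sub (h𝓔 (k+1)) μ (hκlmeas (k+1) hg)
              (hκmeas (k+1) hFm) ?_
            intro A hA
            have hAj : MeasurableSet[𝓔 j] A := hdec (Nat.le_succ_of_le hj) A hA
            have hgeq : Set.indicator (G j) (fun y => κ j y F) =ᵐ[μ] fun y => κ j y F :=
              (hGj.2).mono fun y hy => by rw [Set.indicator_of_mem hy]
            rw [hκint (k+1) hA hg, lintegral_congr_ae (ae_restrict_of_ae hgeq),
              hκJ j hAj hFm, hκJ (k+1) hA hFm]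
          have hx := (ae_ball_iff hP'c).2 key
          exact hx.mono fun x hx => hx
        refine ⟨?_, ?_⟩
        · rw [hGsucc k]
          refine (hHmeas (k+1)).inter ?_
          exact MeasurableSet.iInter fun j => MeasurableSet.iInter fun hj =>
            hTwMeas (k+1) j (G j) (h𝓔 j _ (ihn j (Nat.lt_succ_of_le hj)).1)
        · have hall : ∀ᵐ x ∂μ, ∀ j ∈ Set.Iic k, x ∈ Tw (k+1) j (G j) :=
            (ae_ball_iff (Set.to_countable _)).2 fun j hj => hTwAe j hj
          filter_upwards [hHae (k+1), hall] with x h1 h2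
          rw [hGsucc k]
          exact ⟨h1, Set.mem_iInter.2 fun j => Set.mem_iInter.2 fun hj => h2 j hj⟩
  have hGm : ∀ n, MeasurableSet[𝓔 n] (G n) := fun n => (hGmain n).1
  have hGae : ∀ n, ∀ᵐ x ∂μ, x ∈ G n := fun n => (hGmain n).2
  have hGsubH : ∀ n, G n ⊆ H n := by
    intro n
    cases n with
    | zero => exact subset_of_eq hGzero
    | succ k => exact subset_of_eq (hGsucc k) |>.trans Set.inter_subset_left
  have hGsubT : ∀ k j, j ≤ k → G (k+1) ⊆ Tw (k+1) j (G j) := by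
    intro k j hj
    rw [hGsucc k]
    intro x hx
    exact Set.mem_iInter.1 (Set.mem_iInter.1 hx.2 j) hj
  -- the kernels
  refine ⟨fun n => Set.indicator (G n) (fun x => κ n x), fun n => ?_⟩
  have ρapp : ∀ n x (F : Set X),
      Set.indicator (G n) (fun x => κ n x) x F = Set.indicator (G n) (fun x => κ n x F) x :=
    fun n x F => hindK (G n) (fun x => κ n x) x F
  refine ⟨⟨?_, ?_⟩, ?_, ?_, ?_, ?_⟩
  · -- IsQPK measurability
    intro F hF
    have : (fun x => Set.indicator (G n) (fun x => κ n x) x F)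
        = Set.indicator (G n) (fun x => κ n x F) := funext fun x => ρapp n x F
    rw [this]
    exact ((hκmeas n hF).mono (h𝓔 n) le_rfl).indicator (h𝓔 n _ (hGm n))
  · -- IsQPK mass
    intro x
    beta_reduce
    by_cases hx : x ∈ G n
    · right; rw [Set.indicator_of_mem hx]; exact hκuniv n x
    · left; rw [Set.indicator_of_notMem hx]; simp
  · -- EMeasK
    intro F hF
    have : (fun x => Set.indicator (G n) (fun x => κ n x) x F)
        = Set.indicator (G n) (fun x => κ n x F) := funext fun x => ρapp n x F
    rw [this]
    exact (hκmeas n hF).indicator (hGm n)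
  · -- IsProperK
    intro E F hE hF x
    beta_reduce
    by_cases hx : x ∈ G n
    · have hH := hGsubH n hx
      rw [Set.indicator_of_mem hx]
      by_cases hxE : x ∈ E
      · rw [Set.indicator_of_mem hxE]
        have hEc : κ n x Eᶜ = 0 := hzero n x hH Eᶜ hE.compl (by simp [hxE])
        have hdiff : κ n x (F \ E) = 0 :=
          measure_mono_null (Set.diff_subset_compl F E) hEc
        rw [Set.inter_comm]
        exact measure_inter_conull' hdiff
      · rw [Set.indicator_of_notMem hxE]
        have h0 : κ n x E = 0 := hzero n x hH E hE hxE
        exact measure_inter_null_of_null_left F h0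
    · simp [Set.indicator_of_notMem hx, Set.indicator_apply]
  · -- tower property
    intro m hm x F hF
    beta_reduce
    by_cases hx : x ∈ G n
    · rw [Set.indicator_of_mem hx]
      have hH := hGsubH n hx
      have hrw : ∀ y, Set.indicator (G m) (fun x => κ m x) y F
          = Set.indicator (G m) (fun y => κ m y F) y := fun y => ρapp m y F
      simp_rw [hrw]
      rcases eq_or_lt_of_le hm with rfl | hlt
      · -- m = n : use atoms
        have hAx : κ m x (Atom m x) = 1 := hA4 m x (κ m x) (hκprob m x) (fun E hE => hH E hE)
        have hAc : κ m x (Atom m x)ᶜ = 0 := by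
          have h2 := measure_add_measure_compl (μ := κ m x) (h𝓔 m _ (hA2 m x))
          rw [hAx, hκuniv m x] at h2
          have h3 : 1 + κ m x (Atom m x)ᶜ = 1 + 0 := by rw [h2, add_zero]
          exact (ENNReal.add_right_inj ENNReal.one_ne_top).1 h3
        have haes : ∀ᵐ y ∂(κ m x), y ∈ Atom m x := by
          refine MeasureTheory.mem_ae_iff.2 ?_
          exact hAc
        have hcongr : ∀ᵐ y ∂(κ m x),
            Set.indicator (G m) (fun y => κ m y F) y = κ m x F := by
          filter_upwards [haes] with y hy
          have hyG : y ∈ G m := hA3 m x (G m) (hGm m) hx hy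
          rw [Set.indicator_of_mem hyG, hconst m x y hy F hF]
        rw [lintegral_congr_ae hcongr, lintegral_const, hκuniv m x, mul_one]
      · -- m < n : use tower sets
        obtain ⟨k, rfl⟩ := Nat.exists_eq_succ_of_ne_zero (Nat.ne_zero_of_lt hlt)
        have hTx : x ∈ Tw (k+1) m (G m) := hGsubT k m (Nat.lt_succ_iff.1 hlt) hx
        have hτmeas : Measurable[mX] (fun y => Set.indicator (G m) (fun y => κ m y) y) := by
          refine Measure.measurable_of_measurable_coe _ fun B hB => ?_
          have : (fun y => Set.indicator (G m) (fun y => κ m y) y B)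
              = Set.indicator (G m) (fun y => κ m y B) := funext fun y => ρapp m y B
          rw [this]
          exact ((hκmeas m hB).mono (h𝓔 m) le_rfl).indicator (h𝓔 m _ (hGm m))
        set ν : @Measure X mX :=
          (κ (k+1) x).bind (fun y => Set.indicator (G m) (fun y => κ m y) y) with hνdef
        have hν_ap : ∀ B : Set X, MeasurableSet[mX] B →
            ν B = ∫⁻ y, Set.indicator (G m) (fun y => κ m y B) y ∂(κ (k+1) x) := by
          intro B hB
          rw [hνdef, Measure.bind_apply hB hτmeas.aemeasurable]
          exact lintegral_congr fun y => ρapp m y B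
        have hν_univ : ν Set.univ = 1 := by
          rw [hν_ap Set.univ MeasurableSet.univ, hTx Set.univ (Set.mem_insert _ _),
            hκuniv (k+1) x]
        haveI : IsFiniteMeasure ν := ⟨by rw [hν_univ]; exact ENNReal.one_lt_top⟩
        have hext : ν = κ (k+1) x := by
          refine ext_of_generate_finite P hPgen.symm hPpi (fun s hs => ?_) ?_
          · rw [hν_ap s (hPmeas s hs)]
            exact hTx s (Set.mem_insert_of_mem _ hs)
          · rw [hν_univ, hκuniv (k+1) x]
        rw [← hν_ap F hF, hext]
    · rw [Set.indicator_of_notMem hx]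
      simp
  · -- μ ∈ J
    have key : ∀ E F : Set X, MeasurableSet[𝓔 n] E → MeasurableSet[mX] F →
        μ (E ∩ F) = ∫⁻ x in E, Set.indicator (G n) (fun x => κ n x) x F ∂μ := by
      intro E F hE hF
      have hcongr : (fun x => Set.indicator (G n) (fun x => κ n x) x F)
          =ᵐ[μ] fun x => κ n x F := by
        filter_upwards [hGae n] with x hx
        rw [ρapp n x F, Set.indicator_of_mem hx]
      rw [lintegral_congr_ae (ae_restrict_of_ae hcongr), hκJ n hE hF]
    exact ⟨hμ, fun E F hE hF => key E F hE hF⟩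
end
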